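/- arXiv:1803.00281 — 9 statements merged into one kernel-verified Lean document; each statement's English description precedes it below -/
import Mathlib

section
/- Let D be the symmetric digraph obtained from the join K_k ∨ \overline{K}_{n−k} (n ≥ 3k) by replacing each edge by two opposite arcs. Then κ_k(D) = κ(D) = k. -/
/-- A digraph on vertex type `V`: a loopless binary arc relation. -/
structure Dgraph (V : Type) where
  Arc : V → V → Prop
  loopless : ∀ v, ¬ Arc v v

namespace Dgraph

variable {V : Type}

/-- A digraph is strong (strongly connected) if every vertex reaches every vertex. -/
def IsStrong (D : Dgraph V) : Prop := ∀ u v : V, Relation.ReflTransGen D.Arc u v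

/-- A strong subgraph of `D`: a vertex set together with an arc relation contained
in `D`'s arcs, whose arcs stay inside the vertex set, and which is strongly
connected on its vertex set. -/
structure StrongSub (D : Dgraph V) where
  verts : Set V
  Arc : V → V → Prop
  arc_sub : ∀ u v, Arc u v → D.Arc u v
  arc_mem : ∀ u v, Arc u v → u ∈ verts ∧ v ∈ verts
  strong : ∀ u ∈ verts, ∀ v ∈ verts, Relation.ReflTransGen Arc u v

/-- `κ_S(D)`: the maximum number of pairwise internally disjoint strong subgraphs
of `D` containing `S` (they share exactly the vertices of `S` and no arcs). -/
noncomputable def kappaS (D : Dgraph V) (S : Set V) : ℕ :=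
  sSup {p : ℕ | ∃ f : Fin p → StrongSub D,
    (∀ i, S ⊆ (f i).verts) ∧
    (∀ i j, i ≠ j → (f i).verts ∩ (f j).verts = S) ∧
    (∀ i j, i ≠ j → ∀ u v, ¬ ((f i).Arc u v ∧ (f j).Arc u v))}

/-- The strong subgraph `k`-connectivity `κ_k(D)`. -/
noncomputable def kappa [Fintype V] (D : Dgraph V) (k : ℕ) : ℕ :=
  sInf {m : ℕ | ∃ S : Finset V, S.card = k ∧ kappaS D ↑S = m}

/-- The number of arcs of a digraph. -/
noncomputable def arcCount (D : Dgraph V) : ℕ :=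
  Nat.card {p : V × V // D.Arc p.1 p.2}

/-- Delete the arc `e` from `D`. -/
def deleteArc (D : Dgraph V) (e : V × V) : Dgraph V where
  Arc u v := D.Arc u v ∧ (u, v) ≠ e
  loopless v h := D.loopless v h.1

/-- `D` is minimally strong subgraph `(k,ℓ)`-connected. -/
noncomputable def MinSSC [Fintype V] (D : Dgraph V) (k ℓ : ℕ) : Prop :=
  ℓ ≤ kappa D k ∧ ∀ e : V × V, D.Arc e.1 e.2 → kappa (deleteArc D e) k ≤ ℓ - 1

/-- Minimum out-degree `δ⁺(D)`. -/
noncomputable def minOutDeg [Fintype V] (D : Dgraph V) : ℕ :=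
  sInf (Set.range fun v => Nat.card {w : V // D.Arc v w})

/-- Minimum in-degree `δ⁻(D)`. -/
noncomputable def minInDeg [Fintype V] (D : Dgraph V) : ℕ :=
  sInf (Set.range fun v => Nat.card {w : V // D.Arc w v})

/-- The subdigraph of `D` induced on a vertex set `W`. -/
def induce (D : Dgraph V) (W : Set V) : Dgraph W where
  Arc u v := D.Arc u v
  loopless v h := D.loopless v h

/-- The strong vertex-connectivity `κ(D)`: the minimum number of vertices whose
removal leaves a non-strong digraph, or `n - 1` if there is no such set. -/
noncomputable def vertConn [Fintype V] (D : Dgraph V) : ℕ :=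
  sInf ({Fintype.card V - 1} ∪
    {m : ℕ | ∃ Q : Finset V, Q.card = m ∧ ¬ IsStrong (D.induce (↑Q : Set V)ᶜ)})

/-- `D` is symmetric if the reverse of every arc is an arc. -/
def IsSymmetric (D : Dgraph V) : Prop := ∀ u v, D.Arc u v → D.Arc v u

/-- The underlying undirected (simple) graph of a digraph. -/
def underlying (D : Dgraph V) : SimpleGraph V where
  Adj u v := D.Arc u v ∨ D.Arc v u
  symm := ⟨by intro u v h; tauto⟩
  loopless := ⟨by intro v h; rcases h with h | h <;> exact D.loopless v h⟩

/-- The minimum number of arcs of a minimally strong subgraph `(k,ℓ)`-connected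
digraph on `n` vertices. -/
noncomputable def fMin (n k ℓ : ℕ) : ℕ :=
  sInf {m : ℕ | ∃ D : Dgraph (Fin n), MinSSC D k ℓ ∧ arcCount D = m}

/-- The maximum number of arcs of a minimally strong subgraph `(k,ℓ)`-connected
digraph on `n` vertices. -/
noncomputable def FMax (n k ℓ : ℕ) : ℕ :=
  sSup {m : ℕ | ∃ D : Dgraph (Fin n), MinSSC D k ℓ ∧ arcCount D = m}

end Dgraph

section Aux

open Dgraph

/-- The join digraph. -/
def JD (n k : ℕ) : Dgraph (Fin n) :=
  ⟨fun u v => u ≠ v ∧ ((u : ℕ) < k ∨ (v : ℕ) < k), fun v h => h.1 rfl⟩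

lemma jd_arc {n k : ℕ} {u v : Fin n} (h1 : (u : ℕ) ≠ (v : ℕ))
    (h2 : (u : ℕ) < k ∨ (v : ℕ) < k) : (JD n k).Arc u v :=
  ⟨fun h => h1 (by rw [h]), h2⟩

def hubs (n k : ℕ) : Finset (Fin n) := Finset.univ.filter fun v => (v : ℕ) < k

lemma card_hubs {n k : ℕ} (hkn : k ≤ n) : (hubs n k).card = k := by
  have e : {v : Fin n // (v : ℕ) < k} ≃ Fin k :=
    { toFun := fun v => ⟨v.1, v.2⟩
      invFun := fun i => ⟨⟨i.1, lt_of_lt_of_le i.2 hkn⟩, i.2⟩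
      left_inv := fun v => by ext; rfl
      right_inv := fun i => rfl }
  have h := Fintype.card_congr e
  simpa [hubs, Fintype.card_subtype] using h

lemma vertConn_eq {n k : ℕ} (hk : 2 ≤ k) (hn : 3 * k ≤ n) :
    (JD n k).vertConn = k := by
  have hkn : k ≤ n := by omega
  apply le_antisymm
  · apply Nat.sInf_le
    refine Or.inr ⟨hubs n k, card_hubs hkn, ?_⟩
    intro hs
    have hu : ((⟨2 * k, by omega⟩ : Fin n)) ∈ (↑(hubs n k) : Set (Fin n))ᶜ := by
      simp [hubs]; omega
    have hv : ((⟨2 * k + 1, by omega⟩ : Fin n)) ∈ (↑(hubs n k) : Set (Fin n))ᶜ := by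
      simp [hubs]; omega
    have hpath := hs ⟨_, hu⟩ ⟨_, hv⟩
    rcases hpath.cases_head with h | ⟨w, hw, -⟩
    · simp [Subtype.ext_iff, Fin.ext_iff] at h
    · have h2 := hw.2
      have hw2 : ¬ ((w : Fin n) : ℕ) < k := by
        have := w.2; simp [hubs] at this; omega
      simp only [JD] at h2
      omega
  · refine le_csInf ⟨Fintype.card (Fin n) - 1, Or.inl rfl⟩ ?_
    rintro m (rfl | ⟨Q, hQc, hns⟩)
    · simp; omega
    subst hQc
    by_contra hlt
    push_neg at hlt
    obtain ⟨h0, hh0, hh0Q⟩ : ∃ h0 ∈ hubs n k, h0 ∉ Q := by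
      by_contra hc
      push_neg at hc
      have := Finset.card_le_card (fun x hx => hc x hx)
      rw [card_hubs hkn] at this
      omega
    have hh0k : (h0 : ℕ) < k := by simpa [hubs] using hh0
    apply hns
    have hmem : h0 ∈ (↑Q : Set (Fin n))ᶜ := by simpa using hh0Q
    have toc : ∀ u : ((↑Q : Set (Fin n))ᶜ : Set (Fin n)),
        Relation.ReflTransGen ((JD n k).induce (↑Q : Set (Fin n))ᶜ).Arc u ⟨h0, hmem⟩ := by
      intro u
      by_cases he : (u : Fin n) = h0
      · rw [show u = (⟨h0, hmem⟩ : ((↑Q : Set (Fin n))ᶜ : Set (Fin n))) from Subtype.ext he]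
      · exact Relation.ReflTransGen.single ⟨he, Or.inr hh0k⟩
    have fromc : ∀ v : ((↑Q : Set (Fin n))ᶜ : Set (Fin n)),
        Relation.ReflTransGen ((JD n k).induce (↑Q : Set (Fin n))ᶜ).Arc ⟨h0, hmem⟩ v := by
      intro v
      by_cases he : (v : Fin n) = h0
      · rw [show v = (⟨h0, hmem⟩ : ((↑Q : Set (Fin n))ᶜ : Set (Fin n))) from Subtype.ext he]
      · exact Relation.ReflTransGen.single ⟨fun h => he h.symm, Or.inl hh0k⟩
    exact fun u v => (toc u).trans (fromc v)

/-- Arc relation of the `i`-th strong subgraph: a "double dstar". -/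
def dstar (k : ℕ) {n : ℕ} (S : Finset (Fin n)) (c y : Fin n) (a b : Fin n) : Prop :=
  (a = c ∧ b ∈ S ∧ ¬ (b : ℕ) < k) ∨ (b = c ∧ a ∈ S ∧ ¬ (a : ℕ) < k) ∨
  (a ∈ S ∧ (a : ℕ) < k ∧ b = y) ∨ (b ∈ S ∧ (b : ℕ) < k ∧ a = y) ∨
  (a = c ∧ b = y) ∨ (a = y ∧ b = c)

def starSub {n k : ℕ} (S : Finset (Fin n)) (c y : Fin n)
    (hc : (c : ℕ) < k) (hy : ¬ (y : ℕ) < k) : StrongSub (JD n k) where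
  verts := ↑S ∪ {c, y}
  Arc := dstar k S c y
  arc_sub := by
    rintro u v (⟨rfl, -, hbv⟩ | ⟨rfl, -, hav⟩ | ⟨-, hav, rfl⟩ | ⟨-, hbv, rfl⟩ |
      ⟨rfl, rfl⟩ | ⟨rfl, rfl⟩)
    · exact jd_arc (by omega) (Or.inl hc)
    · exact jd_arc (by omega) (Or.inr hc)
    · exact jd_arc (by omega) (Or.inl hav)
    · exact jd_arc (by omega) (Or.inr hbv)
    · exact jd_arc (by omega) (Or.inl hc)
    · exact jd_arc (by omega) (Or.inr hc)
  arc_mem := by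
    rintro u v (⟨rfl, hb, -⟩ | ⟨rfl, ha, -⟩ | ⟨ha, -, rfl⟩ | ⟨hb, -, rfl⟩ |
      ⟨rfl, rfl⟩ | ⟨rfl, rfl⟩)
    · exact ⟨Or.inr (Or.inl rfl), Or.inl hb⟩
    · exact ⟨Or.inl ha, Or.inr (Or.inl rfl)⟩
    · exact ⟨Or.inl ha, Or.inr (Or.inr rfl)⟩
    · exact ⟨Or.inr (Or.inr rfl), Or.inl hb⟩
    · exact ⟨Or.inr (Or.inl rfl), Or.inr (Or.inr rfl)⟩
    · exact ⟨Or.inr (Or.inr rfl), Or.inr (Or.inl rfl)⟩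
  strong := by
    have toc : ∀ u ∈ (↑S ∪ {c, y} : Set (Fin n)), Relation.ReflTransGen (dstar k S c y) u c := by
      intro u hu
      rcases hu with hu | hu | hu
      · by_cases hlt : (u : ℕ) < k
        · exact Relation.ReflTransGen.head
            (Or.inr (Or.inr (Or.inl ⟨hu, hlt, rfl⟩)))
            (Relation.ReflTransGen.single (Or.inr (Or.inr (Or.inr (Or.inr (Or.inr ⟨rfl, rfl⟩))))))
        · exact Relation.ReflTransGen.single (Or.inr (Or.inl ⟨rfl, hu, hlt⟩))
      · rw [hu]
      · rw [hu]
        exact Relation.ReflTransGen.single (Or.inr (Or.inr (Or.inr (Or.inr (Or.inr ⟨rfl, rfl⟩)))))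
    have fromc : ∀ v ∈ (↑S ∪ {c, y} : Set (Fin n)), Relation.ReflTransGen (dstar k S c y) c v := by
      intro v hv
      rcases hv with hv | hv | hv
      · by_cases hlt : (v : ℕ) < k
        · exact Relation.ReflTransGen.head
            (Or.inr (Or.inr (Or.inr (Or.inr (Or.inl ⟨rfl, rfl⟩)))))
            (Relation.ReflTransGen.single (Or.inr (Or.inr (Or.inr (Or.inl ⟨hv, hlt, rfl⟩)))))
        · exact Relation.ReflTransGen.single (Or.inl ⟨rfl, hv, hlt⟩)
      · rw [hv]
      · rw [hv]
        exact Relation.ReflTransGen.single (Or.inr (Or.inr (Or.inr (Or.inr (Or.inl ⟨rfl, rfl⟩)))))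
    exact fun u hu v hv => (toc u hu).trans (fromc v hv)

lemma kappaS_bdd {n k : ℕ} (hk : 2 ≤ k) (S : Finset (Fin n)) (hS : S.card = k) :
    BddAbove {p : ℕ | ∃ f : Fin p → StrongSub (JD n k),
      (∀ i, ↑S ⊆ (f i).verts) ∧
      (∀ i j, i ≠ j → (f i).verts ∩ (f j).verts = ↑S) ∧
      (∀ i j, i ≠ j → ∀ u v, ¬ ((f i).Arc u v ∧ (f j).Arc u v))} := by
  refine ⟨n * n, ?_⟩
  rintro p ⟨f, hsub, hint, hdis⟩
  have hS2 : 1 < S.card := by omega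
  obtain ⟨u, hu, v, hv, huv⟩ := Finset.one_lt_card.mp hS2
  have hex : ∀ i : Fin p, ∃ q : Fin n × Fin n, (f i).Arc q.1 q.2 := by
    intro i
    have hp := (f i).strong u (hsub i hu) v (hsub i hv)
    rcases hp.cases_head with h | ⟨w, hw, -⟩
    · exact absurd h huv
    · exact ⟨(u, w), hw⟩
  choose q hq using hex
  have hinj : Function.Injective q := by
    intro a b hab
    by_contra hne
    exact hdis a b hne (q a).1 (q a).2 ⟨hq a, by rw [hab]; exact hq b⟩
  have hcard := Fintype.card_le_of_injective q hinj
  simpa using hcard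

lemma kappaS_ge {n k : ℕ} (hk : 2 ≤ k) (hn : 3 * k ≤ n) (S : Finset (Fin n))
    (hS : S.card = k) : k ≤ (JD n k).kappaS ↑S := by
  have hkn : k ≤ n := by omega
  -- external nonhub vertices
  have h1 : (Finset.univ.filter fun v : Fin n => ¬ (v : ℕ) < k).card = n - k := by
    have h2 : (Finset.univ.filter fun v : Fin n => ¬ (v : ℕ) < k) = (hubs n k)ᶜ := by
      ext x; simp [hubs]
    rw [h2, Finset.card_compl, card_hubs hkn, Fintype.card_fin]
  have hT : k ≤ ((Finset.univ.filter fun v : Fin n => ¬ (v : ℕ) < k) \ S).card := by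
    have h3 := Finset.le_card_sdiff S (Finset.univ.filter fun v : Fin n => ¬ (v : ℕ) < k)
    omega
  obtain ⟨T', hT'sub, hT'card⟩ := Finset.exists_subset_card_eq hT
  set c : Fin k → Fin n := fun i => ⟨i.1, lt_of_lt_of_le i.2 hkn⟩ with hcdef
  set y : Fin k → Fin n := fun i => (T'.orderIsoOfFin hT'card i : Fin n) with hydef
  have hck : ∀ i, (c i : ℕ) < k := fun i => i.2
  have hyT : ∀ i, (y i : Fin n) ∈ (Finset.univ.filter fun v : Fin n => ¬ (v : ℕ) < k) \ S :=
    fun i => hT'sub (T'.orderIsoOfFin hT'card i).2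
  have hyk : ∀ i, ¬ (y i : ℕ) < k := by
    intro i; have := hyT i; simp at this; omega
  have hyS : ∀ i, y i ∉ S := by
    intro i; have := hyT i; simp at this; exact this.2
  have hyinj : Function.Injective y := fun a b h =>
    (T'.orderIsoOfFin hT'card).injective (Subtype.coe_injective h)
  have hcinj : Function.Injective c := by
    intro a b h
    apply Fin.ext
    have : (c a : ℕ) = (c b : ℕ) := by rw [h]
    simpa using this
  rw [Dgraph.kappaS]
  apply le_csSup (kappaS_bdd hk S hS)
  refine ⟨fun i => starSub S (c i) (y i) (hck i) (hyk i), ?_, ?_, ?_⟩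
  · intro i x hx
    exact Or.inl hx
  · intro i j hij
    ext x
    simp only [starSub, Set.mem_inter_iff, Set.mem_union, Set.mem_insert_iff,
      Set.mem_singleton_iff, Finset.mem_coe]
    constructor
    · rintro ⟨hx1, hx2⟩
      rcases hx1 with hx1 | rfl | rfl
      · exact hx1
      · rcases hx2 with hx2 | hx2 | hx2
        · exact hx2
        · exact absurd (hcinj hx2) hij
        · exact absurd (congrArg Fin.val hx2) (by have := hck i; have := hyk j; omega)
      · rcases hx2 with hx2 | hx2 | hx2
        · exact absurd hx2 (hyS i)
        · exact absurd (congrArg Fin.val hx2) (by have := hck j; have := hyk i; omega)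
        · exact absurd (hyinj hx2) hij
    · intro hx
      exact ⟨Or.inl hx, Or.inl hx⟩
  · intro i j hij u v hc2
    obtain ⟨h1, h2⟩ := hc2
    have hciv : ∀ t : Fin k, (c t : ℕ) = t.1 := fun _ => rfl
    have hyy : (y i : ℕ) ≠ (y j : ℕ) := fun h => hij (hyinj (Fin.ext h))
    have hyi := hyk i
    have hyj := hyk j
    have hySi := hyS i
    have hySj := hyS j
    have hcki := hck i
    have hckj := hck j
    simp only [starSub, dstar] at h1 h2
    rcases h1 with ⟨rfl, hb, hb'⟩ | ⟨rfl, ha, ha'⟩ | ⟨ha, ha', rfl⟩ | ⟨hb, hb', rfl⟩ |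
      ⟨rfl, rfl⟩ | ⟨rfl, rfl⟩ <;>
    rcases h2 with ⟨e1, e2, e3⟩ | ⟨e1, e2, e3⟩ | ⟨e1, e2, e3⟩ | ⟨e1, e2, e3⟩ |
      ⟨e1, e2⟩ | ⟨e1, e2⟩ <;>
    first
      | omega
      | (simp_all [Fin.ext_iff]; omega)
      | simp_all [Fin.ext_iff]

def S0 (n k : ℕ) (hkn : 2 * k ≤ n) : Finset (Fin n) :=
  Finset.image (fun i : Fin k => (⟨k + i.1, by have := i.2; omega⟩ : Fin n)) Finset.univ

lemma S0_card {n k : ℕ} (hkn : 2 * k ≤ n) : (S0 n k hkn).card = k := by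
  rw [S0, Finset.card_image_of_injective _ ?_, Finset.card_univ, Fintype.card_fin]
  intro a b hab
  apply Fin.ext
  have : k + a.1 = k + b.1 := congrArg Fin.val hab
  omega

lemma S0_ge {n k : ℕ} (hkn : 2 * k ≤ n) {x : Fin n} (hx : x ∈ S0 n k hkn) : k ≤ (x : ℕ) := by
  rw [S0, Finset.mem_image] at hx
  obtain ⟨i, -, rfl⟩ := hx
  simp

lemma kappaS_le {n k : ℕ} (hk : 2 ≤ k) (hn : 3 * k ≤ n) (hkn : 2 * k ≤ n) :
    (JD n k).kappaS ↑(S0 n k hkn) ≤ k := by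
  rw [Dgraph.kappaS]
  apply csSup_le
  · exact ⟨0, Fin.elim0, fun i => i.elim0, fun i => i.elim0, fun i => i.elim0⟩
  rintro p ⟨f, hsub, hint, hdis⟩
  have hu0 : (⟨k, by omega⟩ : Fin n) ∈ S0 n k hkn := by
    rw [S0, Finset.mem_image]
    exact ⟨⟨0, by omega⟩, Finset.mem_univ _, by simp⟩
  have hv0 : (⟨k + 1, by omega⟩ : Fin n) ∈ S0 n k hkn := by
    rw [S0, Finset.mem_image]
    exact ⟨⟨1, by omega⟩, Finset.mem_univ _, by simp⟩
  have huv : (⟨k, by omega⟩ : Fin n) ≠ (⟨k + 1, by omega⟩ : Fin n) := by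
    simp [Fin.ext_iff]
  have hex : ∀ i : Fin p, ∃ w : Fin n, (w : ℕ) < k ∧ w ∈ (f i).verts := by
    intro i
    have hp := (f i).strong _ (hsub i hu0) _ (hsub i hv0)
    rcases hp.cases_head with h | ⟨w, hw, -⟩
    · exact absurd h huv
    · have harc := (f i).arc_sub _ _ hw
      have hwm := ((f i).arc_mem _ _ hw).2
      rcases harc.2 with h | h
      · simp at h
      · exact ⟨w, h, hwm⟩
  choose w hwk hwm using hex
  have hinj : Function.Injective w := by
    intro a b hab
    by_contra hne
    have : w a ∈ (f a).verts ∩ (f b).verts := ⟨hwm a, by rw [hab]; exact hwm b⟩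
    rw [hint a b hne] at this
    have := S0_ge hkn this
    have := hwk a
    omega
  have hginj : Function.Injective (fun i => (⟨(w i : ℕ), hwk i⟩ : Fin k)) := by
    intro a b hab
    have h3 := congrArg Fin.val hab
    exact hinj (Fin.ext h3)
  have hcard := Fintype.card_le_of_injective _ hginj
  simpa using hcard

lemma kappa_eq {n k : ℕ} (hk : 2 ≤ k) (hn : 3 * k ≤ n) : (JD n k).kappa k = k := by
  have hkn : 2 * k ≤ n := by omega
  have hs0 : (JD n k).kappaS ↑(S0 n k hkn) = k :=
    le_antisymm (kappaS_le hk hn hkn) (kappaS_ge hk hn _ (S0_card hkn))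
  apply le_antisymm
  · exact Nat.sInf_le ⟨S0 n k hkn, S0_card hkn, hs0⟩
  · refine le_csInf ⟨k, S0 n k hkn, S0_card hkn, hs0⟩ ?_
    rintro m ⟨S, hSc, rfl⟩
    exact kappaS_ge hk hn S hSc

end Aux

/-- For the symmetric digraph of the join `K_k ∨ \bar{K}_{n-k}` (`n ≥ 3k`),
`κ_k(D) = κ(D) = k`. Vertices `0, …, k-1` form the complete part. -/
theorem stmt3 (n k : ℕ) (hk : 2 ≤ k) (hn : 3 * k ≤ n) :
    let D : Dgraph (Fin n) :=
      ⟨fun u v => u ≠ v ∧ ((u : ℕ) < k ∨ (v : ℕ) < k), fun v h => h.1 rfl⟩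
    D.kappa k = D.vertConn ∧ D.vertConn = k := by
  intro D
  have h1 : (JD n k).vertConn = k := vertConn_eq hk hn
  have h2 : (JD n k).kappa k = k := kappa_eq hk hn
  exact ⟨h2.trans h1.symm, h1⟩
end

section
/- A digraph D is minimally strong subgraph (k,1)-connected if and only if D is a minimally strong digraph (i.e., D is strong but D−e is not strong for every arc e). -/
namespace Dgraph
variable {V : Type}

/-- The defining set of `kappaS`. -/
def kappaSet (D : Dgraph V) (S : Set V) : Set ℕ :=
  {p : ℕ | ∃ f : Fin p → StrongSub D,
    (∀ i, S ⊆ (f i).verts) ∧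
    (∀ i j, i ≠ j → (f i).verts ∩ (f j).verts = S) ∧
    (∀ i j, i ≠ j → ∀ u v, ¬ ((f i).Arc u v ∧ (f j).Arc u v))}

lemma kappaS_def (D : Dgraph V) (S : Set V) : kappaS D S = sSup (kappaSet D S) := rfl

lemma zero_mem_kappaSet (D : Dgraph V) (S : Set V) : 0 ∈ kappaSet D S :=
  ⟨fun i => i.elim0, fun i => i.elim0, fun i => i.elim0, fun i => i.elim0⟩

/-- A whole strong digraph as a strong subgraph. -/
def wholeSub (D : Dgraph V) (h : D.IsStrong) : StrongSub D where
  verts := Set.univ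
  Arc := D.Arc
  arc_sub := fun _ _ h => h
  arc_mem := fun _ _ _ => ⟨trivial, trivial⟩
  strong := fun u _ v _ => h u v

lemma StrongSub.exists_arc {D : Dgraph V} (H : StrongSub D) {a b : V}
    (ha : a ∈ H.verts) (hb : b ∈ H.verts) (hab : a ≠ b) : ∃ u v, H.Arc u v := by
  rcases (H.strong a ha b hb).cases_head with h | ⟨c, hc, _⟩
  · exact absurd h hab
  · exact ⟨a, c, hc⟩

lemma kappaSet_bddAbove [Fintype V] (D : Dgraph V) (S : Set V) {a b : V}
    (ha : a ∈ S) (hb : b ∈ S) (hab : a ≠ b) : BddAbove (kappaSet D S) := by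
  classical
  refine ⟨Fintype.card (V × V), fun p hp => ?_⟩
  obtain ⟨f, hsub, -, hdisj⟩ := hp
  have hex : ∀ i : Fin p, ∃ q : V × V, (f i).Arc q.1 q.2 := by
    intro i
    obtain ⟨u, v, huv⟩ := (f i).exists_arc (hsub i ha) (hsub i hb) hab
    exact ⟨(u, v), huv⟩
  choose g hg using hex
  have hginj : Function.Injective g := by
    intro i j hij
    by_contra hne
    exact hdisj i j hne (g i).1 (g i).2 ⟨hg i, hij ▸ hg j⟩
  simpa using Fintype.card_le_of_injective g hginj

lemma one_le_kappaS [Fintype V] {D : Dgraph V} (hs : D.IsStrong) (S : Set V) {a b : V}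
    (ha : a ∈ S) (hb : b ∈ S) (hab : a ≠ b) : 1 ≤ kappaS D S := by
  refine le_csSup (kappaSet_bddAbove D S ha hb hab) ?_
  refine ⟨fun _ => wholeSub D hs, fun i => Set.subset_univ S, ?_, ?_⟩
  · intro i j hij; exact absurd (Subsingleton.elim i j) hij
  · intro i j hij; exact absurd (Subsingleton.elim i j) hij

lemma kappaS_eq_zero {D : Dgraph V} {S : Set V} {a b : V}
    (ha : a ∈ S) (hb : b ∈ S)
    (h : ¬ Relation.ReflTransGen D.Arc a b) : kappaS D S = 0 := by
  have : kappaSet D S = {0} := by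
    apply Set.eq_singleton_iff_unique_mem.2
    refine ⟨zero_mem_kappaSet D S, ?_⟩
    intro p hp
    by_contra hp0
    obtain ⟨f, hsub, -, -⟩ := hp
    have hppos : 0 < p := Nat.pos_of_ne_zero hp0
    set H := f ⟨0, hppos⟩ with hH
    have : Relation.ReflTransGen D.Arc a b := by
      refine Relation.ReflTransGen.mono H.arc_sub a b ?_
      exact H.strong a (hsub _ ha) b (hsub _ hb)
    exact h this
  rw [kappaS_def, this, csSup_singleton]

/-- The defining set of `kappa`. -/
lemma kappa_set_nonempty [Fintype V] (D : Dgraph V) {k : ℕ} (hkn : k ≤ Fintype.card V) :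
    {m : ℕ | ∃ S : Finset V, S.card = k ∧ kappaS D ↑S = m}.Nonempty := by
  classical
  obtain ⟨S, -, -, hcard⟩ := Finset.exists_subsuperset_card_eq (Finset.empty_subset
    (Finset.univ : Finset V)) (by simp) (by simpa using hkn)
  exact ⟨kappaS D ↑S, S, hcard, rfl⟩

lemma exists_pair_superset [Fintype V] {k : ℕ} (hk2 : 2 ≤ k) (hkn : k ≤ Fintype.card V)
    (u v : V) (huv : u ≠ v) : ∃ S : Finset V, S.card = k ∧ u ∈ S ∧ v ∈ S := by
  classical
  obtain ⟨S, hsub, -, hcard⟩ := Finset.exists_subsuperset_card_eq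
    (Finset.subset_univ {u, v}) (le_trans (by simp [Finset.card_insert_of_notMem,
      Finset.card_le_two.trans]
      ) hk2) (by simpa using hkn)
  exact ⟨S, hcard, hsub (by simp), hsub (by simp)⟩

end Dgraph

/-- `D` is minimally strong subgraph `(k,1)`-connected iff `D` is a minimally
strong digraph: `D` is strong but `D - e` is not strong for every arc `e`. -/
theorem stmt7 {V : Type} [Fintype V] (D : Dgraph V) (k : ℕ)
    (hk2 : 2 ≤ k) (hkn : k ≤ Fintype.card V) :
    D.MinSSC k 1 ↔
      (D.IsStrong ∧ ∀ e : V × V, D.Arc e.1 e.2 → ¬ (D.deleteArc e).IsStrong) := by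
  classical
  constructor
  · rintro ⟨h1, h2⟩
    constructor
    · intro u v
      by_cases huv : u = v
      · exact huv ▸ Relation.ReflTransGen.refl
      obtain ⟨S, hcard, hu, hv⟩ := Dgraph.exists_pair_superset hk2 hkn u v huv
      have hmem : Dgraph.kappaS D ↑S ∈ {m : ℕ | ∃ S : Finset V, S.card = k ∧ Dgraph.kappaS D ↑S = m} :=
        ⟨S, hcard, rfl⟩
      have h1S : 1 ≤ Dgraph.kappaS D ↑S := le_trans h1 (Nat.sInf_le hmem)
      -- extract a strong subgraph containing S
      have hbdd : BddAbove (Dgraph.kappaSet D ↑S) :=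
        Dgraph.kappaSet_bddAbove D ↑S (by simpa using hu) (by simpa using hv) huv
      have hne : (Dgraph.kappaSet D ↑S).Nonempty := ⟨0, Dgraph.zero_mem_kappaSet D ↑S⟩
      have hsup : Dgraph.kappaS D ↑S ∈ Dgraph.kappaSet D ↑S := Nat.sSup_mem hne hbdd
      obtain ⟨f, hsub, -, -⟩ := hsup
      have hppos : 0 < Dgraph.kappaS D ↑S := h1S
      set H := f ⟨0, hppos⟩
      refine Relation.ReflTransGen.mono H.arc_sub u v ?_
      exact H.strong u (hsub _ (by simpa using hu)) v (hsub _ (by simpa using hv))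
    · intro e he hstr
      have h2e := h2 e he
      have h0 : Dgraph.kappa (D.deleteArc e) k = 0 := Nat.le_zero.mp h2e
      have hmem : 0 ∈ {m : ℕ | ∃ S : Finset V, S.card = k ∧ Dgraph.kappaS (D.deleteArc e) ↑S = m} := by
        rw [← h0]
        exact Nat.sInf_mem (Dgraph.kappa_set_nonempty (D.deleteArc e) hkn)
      obtain ⟨S, hcard, hS0⟩ := hmem
      obtain ⟨a, ha, b, hb, hab⟩ := Finset.one_lt_card.mp (by omega : 1 < S.card)
      have := Dgraph.one_le_kappaS hstr (↑S : Set V) (by simpa using ha) (by simpa using hb) hab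
      omega
  · rintro ⟨h1, h2⟩
    constructor
    · refine le_csInf (Dgraph.kappa_set_nonempty D hkn) ?_
      rintro m ⟨S, hcard, rfl⟩
      obtain ⟨a, ha, b, hb, hab⟩ := Finset.one_lt_card.mp (by omega : 1 < S.card)
      exact Dgraph.one_le_kappaS h1 (↑S : Set V) (by simpa using ha) (by simpa using hb) hab
    · intro e he
      have h2e := h2 e he
      -- some pair u v not connected in D - e
      simp only [Dgraph.IsStrong, not_forall] at h2e
      obtain ⟨u, v, huv⟩ := h2e
      have hune : u ≠ v := by rintro rfl; exact huv Relation.ReflTransGen.refl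
      obtain ⟨S, hcard, hu, hv⟩ := Dgraph.exists_pair_superset hk2 hkn u v hune
      have h0 : Dgraph.kappaS (D.deleteArc e) ↑S = 0 :=
        Dgraph.kappaS_eq_zero (by simpa using hu) (by simpa using hv) huv
      have : Dgraph.kappa (D.deleteArc e) k ≤ 0 :=
        Nat.sInf_le ⟨S, hcard, h0⟩
      omega
end

section
/- Let n ≥ 4 and let D be obtained from the complete digraph ↔K_n by deleting the three arcs of a directed 3-cycle u₁u₂u₃u₁. Then κ_2(D) = n−2. -/
section Aux

open Dgraph Relation

variable {V : Type}

def Forb (u1 u2 u3 : V) (p : V × V) : Prop :=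
  p = (u1, u2) ∨ p = (u2, u3) ∨ p = (u3, u1)

lemma forb_ru {u1 u2 u3 : V} (h12 : u1 ≠ u2) (h13 : u1 ≠ u3) (h23 : u2 ≠ u3)
    {a b c : V} (h1 : Forb u1 u2 u3 (a, b)) (h2 : Forb u1 u2 u3 (a, c)) : b = c := by
  simp only [Forb, Prod.mk.injEq] at h1 h2
  rcases h1 with ⟨rfl, rfl⟩ | ⟨rfl, rfl⟩ | ⟨rfl, rfl⟩ <;>
    rcases h2 with ⟨h, rfl⟩ | ⟨h, rfl⟩ | ⟨h, rfl⟩ <;> simp_all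

lemma forb_lu {u1 u2 u3 : V} (h12 : u1 ≠ u2) (h13 : u1 ≠ u3) (h23 : u2 ≠ u3)
    {a b c : V} (h1 : Forb u1 u2 u3 (b, a)) (h2 : Forb u1 u2 u3 (c, a)) : b = c := by
  simp only [Forb, Prod.mk.injEq] at h1 h2
  rcases h1 with ⟨rfl, rfl⟩ | ⟨rfl, rfl⟩ | ⟨rfl, rfl⟩ <;>
    rcases h2 with ⟨rfl, h⟩ | ⟨rfl, h⟩ | ⟨rfl, h⟩ <;> simp_all

lemma forb_mixed {u1 u2 u3 : V} (h12 : u1 ≠ u2) (h13 : u1 ≠ u3) (h23 : u2 ≠ u3)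
    {a b c d : V} (h1 : Forb u1 u2 u3 (a, b)) (h2 : Forb u1 u2 u3 (c, d))
    (had : a ≠ d) (hca : c ≠ a) : b = c := by
  simp only [Forb, Prod.mk.injEq] at h1 h2
  rcases h1 with ⟨rfl, rfl⟩ | ⟨rfl, rfl⟩ | ⟨rfl, rfl⟩ <;>
    rcases h2 with ⟨rfl, rfl⟩ | ⟨rfl, rfl⟩ | ⟨rfl, rfl⟩ <;> simp_all

def triD (u1 u2 u3 : V) : Dgraph V :=
  ⟨fun u v => u ≠ v ∧ ¬ Forb u1 u2 u3 (u, v), fun v h => h.1 rfl⟩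

def HArc (u1 u2 u3 x y w : V) (a b : V) : Prop :=
  (triD u1 u2 u3).Arc a b ∧
    ((a = w ∧ (b = x ∨ b = y)) ∨ ((a = x ∨ a = y) ∧ b = w) ∨
     (a = x ∧ b = y ∧ (Forb u1 u2 u3 (x, w) ∨ Forb u1 u2 u3 (w, y))) ∨
     (a = y ∧ b = x ∧ (Forb u1 u2 u3 (y, w) ∨ Forb u1 u2 u3 (w, x))))

def Hsub {u1 u2 u3 : V} (h12 : u1 ≠ u2) (h13 : u1 ≠ u3) (h23 : u2 ≠ u3)
    (x y w : V) (hxy : x ≠ y) (hwx : w ≠ x) (hwy : w ≠ y) :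
    (triD u1 u2 u3).StrongSub where
  verts := {x, y, w}
  Arc := HArc u1 u2 u3 x y w
  arc_sub _ _ h := h.1
  arc_mem u v h := by
    rcases h.2 with ⟨rfl, rfl | rfl⟩ | ⟨rfl | rfl, rfl⟩ | ⟨rfl, rfl, -⟩ | ⟨rfl, rfl, -⟩ <;>
      simp [Set.mem_insert_iff]
  strong := by
    have hxw : Relation.ReflTransGen (HArc u1 u2 u3 x y w) x w := by
      by_cases hf : Forb u1 u2 u3 (x, w)
      · have hxy' : ¬ Forb u1 u2 u3 (x, y) := fun h => hwy (forb_ru h12 h13 h23 hf h)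
        have hyw' : ¬ Forb u1 u2 u3 (y, w) := fun h => hxy (forb_lu h12 h13 h23 hf h)
        exact Relation.ReflTransGen.head
          ⟨⟨hxy, hxy'⟩, Or.inr (Or.inr (Or.inl ⟨rfl, rfl, Or.inl hf⟩))⟩
          (Relation.ReflTransGen.single
            ⟨⟨hwy.symm, hyw'⟩, Or.inr (Or.inl ⟨Or.inr rfl, rfl⟩)⟩)
      · exact Relation.ReflTransGen.single ⟨⟨hwx.symm, hf⟩, Or.inr (Or.inl ⟨Or.inl rfl, rfl⟩)⟩
    have hyw : Relation.ReflTransGen (HArc u1 u2 u3 x y w) y w := by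
      by_cases hf : Forb u1 u2 u3 (y, w)
      · have hyx' : ¬ Forb u1 u2 u3 (y, x) := fun h => hwx (forb_ru h12 h13 h23 hf h)
        have hxw' : ¬ Forb u1 u2 u3 (x, w) := fun h => hxy ((forb_lu h12 h13 h23 hf h).symm)
        exact Relation.ReflTransGen.head
          ⟨⟨hxy.symm, hyx'⟩, Or.inr (Or.inr (Or.inr ⟨rfl, rfl, Or.inl hf⟩))⟩
          (Relation.ReflTransGen.single
            ⟨⟨hwx.symm, hxw'⟩, Or.inr (Or.inl ⟨Or.inl rfl, rfl⟩)⟩)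
      · exact Relation.ReflTransGen.single ⟨⟨hwy.symm, hf⟩, Or.inr (Or.inl ⟨Or.inr rfl, rfl⟩)⟩
    have hwx' : Relation.ReflTransGen (HArc u1 u2 u3 x y w) w x := by
      by_cases hf : Forb u1 u2 u3 (w, x)
      · have hwy' : ¬ Forb u1 u2 u3 (w, y) := fun h => hxy (forb_ru h12 h13 h23 hf h)
        have hyx' : ¬ Forb u1 u2 u3 (y, x) := fun h => hwy (forb_lu h12 h13 h23 hf h)
        exact Relation.ReflTransGen.head ⟨⟨hwy, hwy'⟩, Or.inl ⟨rfl, Or.inr rfl⟩⟩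
          (Relation.ReflTransGen.single
            ⟨⟨hxy.symm, hyx'⟩, Or.inr (Or.inr (Or.inr ⟨rfl, rfl, Or.inr hf⟩))⟩)
      · exact Relation.ReflTransGen.single ⟨⟨hwx, hf⟩, Or.inl ⟨rfl, Or.inl rfl⟩⟩
    have hwy' : Relation.ReflTransGen (HArc u1 u2 u3 x y w) w y := by
      by_cases hf : Forb u1 u2 u3 (w, y)
      · have hwx2 : ¬ Forb u1 u2 u3 (w, x) := fun h => hxy ((forb_ru h12 h13 h23 hf h).symm)
        have hxy' : ¬ Forb u1 u2 u3 (x, y) := fun h => hwx (forb_lu h12 h13 h23 hf h)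
        exact Relation.ReflTransGen.head ⟨⟨hwx, hwx2⟩, Or.inl ⟨rfl, Or.inl rfl⟩⟩
          (Relation.ReflTransGen.single
            ⟨⟨hxy, hxy'⟩, Or.inr (Or.inr (Or.inl ⟨rfl, rfl, Or.inr hf⟩))⟩)
      · exact Relation.ReflTransGen.single ⟨⟨hwy, hf⟩, Or.inl ⟨rfl, Or.inr rfl⟩⟩
    intro a ha b hb
    have ra : Relation.ReflTransGen (HArc u1 u2 u3 x y w) a w := by
      rcases ha with rfl | rfl | rfl
      exacts [hxw, hyw, Relation.ReflTransGen.refl]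
    have rb : Relation.ReflTransGen (HArc u1 u2 u3 x y w) w b := by
      rcases hb with rfl | rfl | rfl
      exacts [hwx', hwy', Relation.ReflTransGen.refl]
    exact ra.trans rb

lemma hArc_disjoint {u1 u2 u3 : V} (h12 : u1 ≠ u2) (h13 : u1 ≠ u3) (h23 : u2 ≠ u3)
    {x y w w' : V} (hxy : x ≠ y) (hwx : w ≠ x) (hwy : w ≠ y)
    (hw'x : w' ≠ x) (hw'y : w' ≠ y) (hww' : w ≠ w') (a b : V) :
    ¬ (HArc u1 u2 u3 x y w a b ∧ HArc u1 u2 u3 x y w' a b) := by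
  rintro ⟨⟨-, h1⟩, ⟨-, h2⟩⟩
  rcases h1 with ⟨e1, f1 | f1⟩ | ⟨e1 | e1, f1⟩ | ⟨e1, f1, hf1⟩ | ⟨e1, f1, hf1⟩ <;>
    rcases h2 with ⟨e2, f2 | f2⟩ | ⟨e2 | e2, f2⟩ | ⟨e2, f2, hf2⟩ | ⟨e2, f2, hf2⟩ <;>
    first
    | grind
    | (subst e1; subst f1
       rcases hf1 with hf1 | hf1 <;> rcases hf2 with hf2 | hf2 <;>
        first
        | exact hww' (forb_ru h12 h13 h23 hf1 hf2)
        | exact hww' (forb_lu h12 h13 h23 hf1 hf2)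
        | exact hww' (forb_mixed h12 h13 h23 hf1 hf2 hxy hw'x)
        | exact hww' (forb_mixed h12 h13 h23 hf1 hf2 hxy.symm hw'y)
        | exact hww' ((forb_mixed h12 h13 h23 hf2 hf1 hxy hwx).symm)
        | exact hww' ((forb_mixed h12 h13 h23 hf2 hf1 hxy.symm hwy).symm))

lemma internal_or_arc (D : Dgraph V) (h : D.StrongSub) {x y : V}
    (hx : x ∈ h.verts) (hy : y ∈ h.verts) (hxy : x ≠ y) :
    (∃ w, w ∈ h.verts ∧ w ≠ x ∧ w ≠ y) ∨ h.Arc x y := by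
  rcases (h.strong x hx y hy).cases_head with h' | ⟨c, hc, -⟩
  · exact absurd h' hxy
  · by_cases hcy : c = y
    · subst hcy; exact Or.inr hc
    · refine Or.inl ⟨c, (h.arc_mem _ _ hc).2, fun h' => ?_, hcy⟩
      subst h'
      exact D.loopless _ (h.arc_sub _ _ hc)

lemma family_bound_special [Fintype V] [DecidableEq V] (D : Dgraph V) {x y : V}
    (hxy : x ≠ y) (hno : ¬ D.Arc x y) {p : ℕ} (f : Fin p → D.StrongSub)
    (hS : ∀ i, ({x, y} : Set V) ⊆ (f i).verts)
    (hV : ∀ i j, i ≠ j → (f i).verts ∩ (f j).verts = {x, y}) :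
    p ≤ Fintype.card V - 2 := by
  have hint : ∀ i, ∃ w, w ∈ (f i).verts ∧ w ≠ x ∧ w ≠ y := by
    intro i
    rcases internal_or_arc D (f i) (hS i (by simp)) (hS i (by simp)) hxy with h | h
    · exact h
    · exact absurd ((f i).arc_sub _ _ h) hno
  choose g hg1 hg2 hg3 using hint
  have hginj : Function.Injective
      (fun i => (⟨g i, by simp [hg2 i, hg3 i]⟩ : ↑(({x, y} : Finset V)ᶜ))) := by
    intro i j hij
    by_contra hne
    rw [Subtype.mk.injEq] at hij
    have hmem : g i ∈ (f i).verts ∩ (f j).verts := ⟨hg1 i, by rw [hij]; exact hg1 j⟩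
    rw [hV i j hne] at hmem
    rcases hmem with h | h
    · exact hg2 i h
    · exact hg3 i h
  calc p = Fintype.card (Fin p) := (Fintype.card_fin p).symm
    _ ≤ Fintype.card ↑(({x, y} : Finset V)ᶜ) := Fintype.card_le_of_injective _ hginj
    _ = Fintype.card V - 2 := by
        rw [Fintype.card_coe, Finset.card_compl,
          Finset.card_insert_of_notMem (by simpa), Finset.card_singleton]

lemma family_bound [Fintype V] [DecidableEq V] (D : Dgraph V) {x y : V}
    (hxy : x ≠ y) {p : ℕ} (f : Fin p → D.StrongSub)
    (hS : ∀ i, ({x, y} : Set V) ⊆ (f i).verts)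
    (hV : ∀ i j, i ≠ j → (f i).verts ∩ (f j).verts = {x, y})
    (hA : ∀ i j, i ≠ j → ∀ u v, ¬ ((f i).Arc u v ∧ (f j).Arc u v)) :
    p ≤ Fintype.card V - 1 := by
  classical
  have key : ∀ i : Fin p, (∃ w, w ∈ (f i).verts ∧ w ≠ x ∧ w ≠ y) ∨ (f i).Arc x y := fun i =>
    internal_or_arc D (f i) (hS i (by simp)) (hS i (by simp)) hxy
  let g : Fin p → Option ↑(({x, y} : Finset V)ᶜ) := fun i =>
    if h : ∃ w, w ∈ (f i).verts ∧ w ≠ x ∧ w ≠ y then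
      some ⟨h.choose, by have := h.choose_spec; simp [this.2.1, this.2.2]⟩
    else none
  have hginj : Function.Injective g := by
    intro i j hij
    by_contra hne
    by_cases hi : ∃ w, w ∈ (f i).verts ∧ w ≠ x ∧ w ≠ y <;>
      by_cases hj : ∃ w, w ∈ (f j).verts ∧ w ≠ x ∧ w ≠ y
    · simp only [g, dif_pos hi, dif_pos hj, Option.some.injEq, Subtype.mk.injEq] at hij
      have hmem : hi.choose ∈ (f i).verts ∩ (f j).verts :=
        ⟨hi.choose_spec.1, by rw [hij]; exact hj.choose_spec.1⟩
      rw [hV i j hne] at hmem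
      rcases hmem with h | h
      · exact hi.choose_spec.2.1 h
      · exact hi.choose_spec.2.2 h
    · simp only [g, dif_pos hi, dif_neg hj] at hij
      cases hij
    · simp only [g, dif_neg hi, dif_pos hj] at hij
      cases hij
    · exact hA i j hne x y ⟨(key i).resolve_left hi, (key j).resolve_left hj⟩
  have hcard : p ≤ (Fintype.card V - 2) + 1 := by
    calc p = Fintype.card (Fin p) := (Fintype.card_fin p).symm
      _ ≤ Fintype.card (Option ↑(({x, y} : Finset V)ᶜ)) :=
          Fintype.card_le_of_injective _ hginj
      _ = (Fintype.card V - 2) + 1 := by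
          rw [Fintype.card_option, Fintype.card_coe, Finset.card_compl,
            Finset.card_insert_of_notMem (by simpa), Finset.card_singleton]
  have h2 : 1 < Fintype.card V := Fintype.one_lt_card_iff_nontrivial.mpr ⟨⟨x, y, hxy⟩⟩
  omega

lemma family_exists [Fintype V] [DecidableEq V] {u1 u2 u3 : V}
    (h12 : u1 ≠ u2) (h13 : u1 ≠ u3) (h23 : u2 ≠ u3) (x y : V) (hxy : x ≠ y) :
    ∃ f : Fin (Fintype.card V - 2) → (triD u1 u2 u3).StrongSub,
      (∀ i, ({x, y} : Set V) ⊆ (f i).verts) ∧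
      (∀ i j, i ≠ j → (f i).verts ∩ (f j).verts = {x, y}) ∧
      (∀ i j, i ≠ j → ∀ u v, ¬ ((f i).Arc u v ∧ (f j).Arc u v)) := by
  have hcard : Fintype.card ↑(({x, y} : Finset V)ᶜ) = Fintype.card V - 2 := by
    rw [Fintype.card_coe, Finset.card_compl,
      Finset.card_insert_of_notMem (by simpa), Finset.card_singleton]
  let e := (Fintype.equivFinOfCardEq hcard).symm
  have hw : ∀ i, ((e i : V) ≠ x ∧ (e i : V) ≠ y) := by
    intro i
    have h := (e i).2
    simp only [Finset.mem_compl, Finset.mem_insert, Finset.mem_singleton] at h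
    exact ⟨fun h' => h (Or.inl h'), fun h' => h (Or.inr h')⟩
  have hinj : ∀ i j : Fin (Fintype.card V - 2), i ≠ j → (e i : V) ≠ (e j : V) := by
    intro i j hij h
    exact hij (e.injective (Subtype.ext h))
  refine ⟨fun i => Hsub h12 h13 h23 x y (e i) hxy (hw i).1 (hw i).2, ?_, ?_, ?_⟩
  · intro i v hv
    simp only [Set.mem_insert_iff, Set.mem_singleton_iff] at hv ⊢
    tauto
  · intro i j hij
    have hne := hinj i j hij
    ext v
    simp only [Set.mem_inter_iff, Set.mem_insert_iff, Set.mem_singleton_iff]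
    constructor
    · rintro ⟨h1 | h1 | h1, h2 | h2 | h2⟩ <;>
        first
        | exact Or.inl h1
        | exact Or.inr h1
        | exact Or.inl h2
        | exact Or.inr h2
        | exact absurd (h1.symm.trans h2) hne
    · rintro (rfl | rfl)
      · exact ⟨Set.mem_insert _ _, Set.mem_insert _ _⟩
      · exact ⟨Set.mem_insert_of_mem _ (Set.mem_insert _ _),
          Set.mem_insert_of_mem _ (Set.mem_insert _ _)⟩
  · intro i j hij u v
    exact hArc_disjoint h12 h13 h23 hxy (hw i).1 (hw i).2 (hw j).1 (hw j).2 (hinj i j hij) u v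

lemma kappaS_ge_s9 [Fintype V] [DecidableEq V] {u1 u2 u3 : V}
    (h12 : u1 ≠ u2) (h13 : u1 ≠ u3) (h23 : u2 ≠ u3) (x y : V) (hxy : x ≠ y) :
    Fintype.card V - 2 ≤ (triD u1 u2 u3).kappaS {x, y} := by
  unfold Dgraph.kappaS
  apply le_csSup
  · refine ⟨Fintype.card V - 1, fun p hp => ?_⟩
    obtain ⟨f, hS, hV, hA⟩ := hp
    exact family_bound _ hxy f hS hV hA
  · obtain ⟨f, hS, hV, hA⟩ := family_exists h12 h13 h23 x y hxy
    exact ⟨f, hS, hV, hA⟩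

lemma kappaS_eq12 [Fintype V] [DecidableEq V] {u1 u2 u3 : V}
    (h12 : u1 ≠ u2) (h13 : u1 ≠ u3) (h23 : u2 ≠ u3) :
    (triD u1 u2 u3).kappaS {u1, u2} = Fintype.card V - 2 := by
  refine le_antisymm ?_ (kappaS_ge_s9 h12 h13 h23 u1 u2 h12)
  unfold Dgraph.kappaS
  apply csSup_le
  · obtain ⟨f, hS, hV, hA⟩ := family_exists h12 h13 h23 u1 u2 h12
    exact ⟨Fintype.card V - 2, f, hS, hV, hA⟩
  · rintro p ⟨f, hS, hV, hA⟩
    exact family_bound_special (triD u1 u2 u3) h12 (fun h => h.2 (Or.inl rfl)) f hS hV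

lemma kappa_eq_s9 [Fintype V] [DecidableEq V] {u1 u2 u3 : V}
    (h12 : u1 ≠ u2) (h13 : u1 ≠ u3) (h23 : u2 ≠ u3) :
    (triD u1 u2 u3).kappa 2 = Fintype.card V - 2 := by
  unfold Dgraph.kappa
  have hmem : Fintype.card V - 2 ∈
      {m : ℕ | ∃ S : Finset V, S.card = 2 ∧ (triD u1 u2 u3).kappaS ↑S = m} := by
    refine ⟨{u1, u2}, ?_, ?_⟩
    · rw [Finset.card_insert_of_notMem (by simpa), Finset.card_singleton]
    · rw [show ((({u1, u2} : Finset V) : Set V)) = ({u1, u2} : Set V) by simp]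
      exact kappaS_eq12 h12 h13 h23
  refine le_antisymm (Nat.sInf_le hmem) (le_csInf ⟨_, hmem⟩ ?_)
  rintro m ⟨S, hS2, rfl⟩
  obtain ⟨x, y, hxy, rfl⟩ := Finset.card_eq_two.mp hS2
  rw [show ((({x, y} : Finset V) : Set V)) = ({x, y} : Set V) by simp]
  exact kappaS_ge_s9 h12 h13 h23 x y hxy

end Aux

/-- For `n ≥ 4`, the digraph obtained from the complete digraph on `n` vertices
by deleting the arcs of a directed 3-cycle `u₁u₂u₃u₁` has `κ₂ = n - 2`. -/


theorem stmt9 {V : Type} [Fintype V] (n : ℕ)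
    (hn : Fintype.card V = n) (h4 : 4 ≤ n)
    (u1 u2 u3 : V) (h12 : u1 ≠ u2) (h13 : u1 ≠ u3) (h23 : u2 ≠ u3) :
    let D : Dgraph V :=
      ⟨fun u v => u ≠ v ∧
          ¬ ((u, v) = (u1, u2) ∨ (u, v) = (u2, u3) ∨ (u, v) = (u3, u1)),
        fun v h => h.1 rfl⟩
    D.kappa 2 = n - 2 := by
  intro D
  letI := Classical.decEq V
  have : D = triD u1 u2 u3 := rfl
  rw [this, kappa_eq_s9 h12 h13 h23, hn]
end

section
/- Let n ≥ 4 and let D be obtained from the complete digraph ↔K_n by deleting the arcs of ⌊n/2⌋ vertex-disjoint directed 2-cycles. Then κ_2(D) = n−2, and for every arc e of D, κ_2(D−e) ≤ n−3. -/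
section StmtAux

open Dgraph

variable {V : Type}

def cycSub (D : Dgraph V) (m : ℕ) (c : ZMod (m+1) → V)
    (hc : ∀ i, D.Arc (c i) (c (i+1))) : D.StrongSub where
  verts := Set.range c
  Arc u v := ∃ i, u = c i ∧ v = c (i+1)
  arc_sub u v := by rintro ⟨i, rfl, rfl⟩; exact hc i
  arc_mem u v := by rintro ⟨i, rfl, rfl⟩; exact ⟨⟨i, rfl⟩, ⟨i+1, rfl⟩⟩
  strong := by
    have key : ∀ (k : ℕ) (i : ZMod (m+1)),
        Relation.ReflTransGen (fun u v => ∃ i, u = c i ∧ v = c (i+1)) (c i) (c (i + (k:ZMod (m+1)))) := by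
      intro k
      induction k with
      | zero => intro i; simpa using Relation.ReflTransGen.refl
      | succ k ih =>
        intro i
        have h2 : (i + ((k:ℕ):ZMod (m+1))) + 1 = i + (((k+1:ℕ)):ZMod (m+1)) := by push_cast; ring
        exact (ih i).tail ⟨i + (k:ZMod (m+1)), rfl, by rw [h2]⟩
    rintro u ⟨i, rfl⟩ v ⟨j, rfl⟩
    have := key (j - i).val i
    rwa [ZMod.natCast_val, ZMod.cast_id, add_sub_cancel] at this

section shapes
variable (D : Dgraph V) (x y z z1 z2 : V)

/-- A: 2-cycle on x,y -/
def pairSub (h1 : D.Arc x y) (h2 : D.Arc y x) : D.StrongSub :=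
  cycSub D 1 ![x,y] (by
    intro i; fin_cases i <;>
      simp [show ((0:ZMod 2)+1) = 1 from rfl, show ((1:ZMod 2)+1) = 0 from rfl] <;> assumption)

lemma pairSub_verts (h1 h2) : (pairSub D x y h1 h2).verts = {x, y} := by
  show Set.range (![x,y] : Fin 2 → V) = _
  simp [Matrix.range_cons, Matrix.range_empty]
  exact Set.pair_comm y x

lemma pairSub_arc (h1 h2) {u v : V} (h : (pairSub D x y h1 h2).Arc u v) :
    (u = x ∧ v = y) ∨ (u = y ∧ v = x) := by
  obtain ⟨i, rfl, rfl⟩ := h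
  fin_cases i <;>
    simp [show ((0:ZMod 2)+1) = 1 from rfl, show ((1:ZMod 2)+1) = 0 from rfl] <;>
    simp [Fin.isValue, ZMod]

/-- T: x→z→y→z→x -/
def triSub (h1 : D.Arc x z) (h2 : D.Arc z y) (h3 : D.Arc y z) (h4 : D.Arc z x) : D.StrongSub :=
  cycSub D 3 ![x,z,y,z] (by
    intro i; fin_cases i <;>
      simp [show ((0:ZMod 4)+1) = 1 from rfl, show ((1:ZMod 4)+1) = 2 from rfl,
        show ((2:ZMod 4)+1) = 3 from rfl, show ((3:ZMod 4)+1) = 0 from rfl] <;> assumption)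

lemma triSub_verts (h1 h2 h3 h4) : (triSub D x y z h1 h2 h3 h4).verts = {x, y, z} := by
  show Set.range (![x,z,y,z] : Fin 4 → V) = _
  simp [Matrix.range_cons, Matrix.range_empty]
  ext u; simp; tauto

lemma triSub_arc (h1 h2 h3 h4) {u v : V} (h : (triSub D x y z h1 h2 h3 h4).Arc u v) :
    (u = x ∧ v = z) ∨ (u = z ∧ v = y) ∨ (u = y ∧ v = z) ∨ (u = z ∧ v = x) := by
  obtain ⟨i, rfl, rfl⟩ := h
  fin_cases i <;>
    simp [show ((0:ZMod 4)+1) = 1 from rfl, show ((1:ZMod 4)+1) = 2 from rfl,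
      show ((2:ZMod 4)+1) = 3 from rfl, show ((3:ZMod 4)+1) = 0 from rfl] <;>
    simp [Fin.isValue, ZMod]

/-- C: x→y→z→y→x -/
def cSub (h1 : D.Arc x y) (h2 : D.Arc y z) (h3 : D.Arc z y) (h4 : D.Arc y x) : D.StrongSub :=
  cycSub D 3 ![x,y,z,y] (by
    intro i; fin_cases i <;>
      simp [show ((0:ZMod 4)+1) = 1 from rfl, show ((1:ZMod 4)+1) = 2 from rfl,
        show ((2:ZMod 4)+1) = 3 from rfl, show ((3:ZMod 4)+1) = 0 from rfl] <;> assumption)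

lemma cSub_verts (h1 h2 h3 h4) : (cSub D x y z h1 h2 h3 h4).verts = {x, y, z} := by
  show Set.range (![x,y,z,y] : Fin 4 → V) = _
  simp [Matrix.range_cons, Matrix.range_empty]
  ext u; simp; tauto

lemma cSub_arc (h1 h2 h3 h4) {u v : V} (h : (cSub D x y z h1 h2 h3 h4).Arc u v) :
    (u = x ∧ v = y) ∨ (u = y ∧ v = z) ∨ (u = z ∧ v = y) ∨ (u = y ∧ v = x) := by
  obtain ⟨i, rfl, rfl⟩ := h
  fin_cases i <;>
    simp [show ((0:ZMod 4)+1) = 1 from rfl, show ((1:ZMod 4)+1) = 2 from rfl,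
      show ((2:ZMod 4)+1) = 3 from rfl, show ((3:ZMod 4)+1) = 0 from rfl] <;>
    simp [Fin.isValue, ZMod]

/-- B: x→z2→z1→y→z1→z2→x -/
def bSub (h1 : D.Arc x z2) (h2 : D.Arc z2 z1) (h3 : D.Arc z1 y) (h4 : D.Arc y z1)
    (h5 : D.Arc z1 z2) (h6 : D.Arc z2 x) : D.StrongSub :=
  cycSub D 5 ![x,z2,z1,y,z1,z2] (by
    intro i; fin_cases i <;>
      simp [show ((0:ZMod 6)+1) = 1 from rfl, show ((1:ZMod 6)+1) = 2 from rfl,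
        show ((2:ZMod 6)+1) = 3 from rfl, show ((3:ZMod 6)+1) = 4 from rfl,
        show ((4:ZMod 6)+1) = 5 from rfl, show ((5:ZMod 6)+1) = 0 from rfl,
      show (![x,z2,z1,y,z1,z2] : ZMod 6 → V) (5:ZMod 6) = z2 from rfl,
      show (![x,z2,z1,y,z1,z2] : ZMod 6 → V) (4:ZMod 6) = z1 from rfl] <;> assumption)

lemma bSub_verts (h1 h2 h3 h4 h5 h6) :
    (bSub D x y z1 z2 h1 h2 h3 h4 h5 h6).verts = {x, y, z1, z2} := by
  show Set.range (![x,z2,z1,y,z1,z2] : Fin 6 → V) = _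
  simp [Matrix.range_cons, Matrix.range_empty]
  ext u; simp; tauto

lemma bSub_arc (h1 h2 h3 h4 h5 h6) {u v : V}
    (h : (bSub D x y z1 z2 h1 h2 h3 h4 h5 h6).Arc u v) :
    (u = x ∧ v = z2) ∨ (u = z2 ∧ v = z1) ∨ (u = z1 ∧ v = y) ∨ (u = y ∧ v = z1) ∨
      (u = z1 ∧ v = z2) ∨ (u = z2 ∧ v = x) := by
  obtain ⟨i, rfl, rfl⟩ := h
  fin_cases i <;>
    simp [show ((0:ZMod 6)+1) = 1 from rfl, show ((1:ZMod 6)+1) = 2 from rfl,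
      show ((2:ZMod 6)+1) = 3 from rfl, show ((3:ZMod 6)+1) = 4 from rfl,
      show ((4:ZMod 6)+1) = 5 from rfl, show ((5:ZMod 6)+1) = 0 from rfl,
      show (![x,z2,z1,y,z1,z2] : ZMod 6 → V) (5:ZMod 6) = z2 from rfl,
      show (![x,z2,z1,y,z1,z2] : ZMod 6 → V) (4:ZMod 6) = z1 from rfl] <;>
    simp [Fin.isValue, ZMod]

end shapes

/-! ### Generic facts -/

lemma first_arc {D : Dgraph V} (G : D.StrongSub) {u v : V} (hu : u ∈ G.verts)
    (hv : v ∈ G.verts) (huv : u ≠ v) : ∃ t, t ∈ G.verts ∧ t ≠ u ∧ G.Arc u t := by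
  rcases (G.strong u hu v hv).cases_head with h | ⟨t, ht, -⟩
  · exact absurd h huv
  · exact ⟨t, (G.arc_mem u t ht).2, fun h => D.loopless u (h ▸ G.arc_sub u t ht), ht⟩

lemma last_arc {D : Dgraph V} (G : D.StrongSub) {u v : V} (hu : u ∈ G.verts)
    (hv : v ∈ G.verts) (huv : u ≠ v) : ∃ t, t ∈ G.verts ∧ t ≠ v ∧ G.Arc t v := by
  rcases (G.strong u hu v hv).cases_tail with h | ⟨t, -, ht⟩
  · exact absurd h.symm huv
  · exact ⟨t, (G.arc_mem t v ht).1, fun h => D.loopless v (h ▸ G.arc_sub t v ht), ht⟩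

lemma disj_of_noS {D : Dgraph V} {x y : V} {G G' : D.StrongSub}
    (hI : G.verts ∩ G'.verts = {x, y})
    (hG : ∀ u v, G.Arc u v → ¬(u ∈ ({x,y} : Set V) ∧ v ∈ ({x,y} : Set V))) :
    ∀ u v, ¬ (G.Arc u v ∧ G'.Arc u v) := by
  rintro u v ⟨h1, h2⟩
  refine hG u v h1 ⟨?_, ?_⟩
  · rw [← hI]; exact ⟨(G.arc_mem u v h1).1, (G'.arc_mem u v h2).1⟩
  · rw [← hI]; exact ⟨(G.arc_mem u v h1).2, (G'.arc_mem u v h2).2⟩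

lemma disj_of_noS' {D : Dgraph V} {x y : V} {G G' : D.StrongSub}
    (hI : G.verts ∩ G'.verts = {x, y})
    (hG : ∀ u v, G'.Arc u v → ¬(u ∈ ({x,y} : Set V) ∧ v ∈ ({x,y} : Set V))) :
    ∀ u v, ¬ (G.Arc u v ∧ G'.Arc u v) := by
  rintro u v ⟨h1, h2⟩
  refine hG u v h2 ⟨?_, ?_⟩
  · rw [← hI]; exact ⟨(G.arc_mem u v h1).1, (G'.arc_mem u v h2).1⟩
  · rw [← hI]; exact ⟨(G.arc_mem u v h1).2, (G'.arc_mem u v h2).2⟩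

lemma triSub_noS {D : Dgraph V} {x y z : V} (hzx : z ≠ x) (hzy : z ≠ y) (h1 h2 h3 h4) :
    ∀ u v, (triSub D x y z h1 h2 h3 h4).Arc u v →
      ¬ (u ∈ ({x,y} : Set V) ∧ v ∈ ({x,y} : Set V)) := by
  rintro u v harc ⟨hu, hv⟩
  simp only [Set.mem_insert_iff, Set.mem_singleton_iff] at hu hv
  rcases triSub_arc D x y z h1 h2 h3 h4 harc with ⟨rfl,rfl⟩|⟨rfl,rfl⟩|⟨rfl,rfl⟩|⟨rfl,rfl⟩ <;>
    tauto

lemma bSub_noS {D : Dgraph V} {x y z1 z2 : V} (h1x : z1 ≠ x) (h1y : z1 ≠ y)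
    (h2x : z2 ≠ x) (h2y : z2 ≠ y) (h1 h2 h3 h4 h5 h6) :
    ∀ u v, (bSub D x y z1 z2 h1 h2 h3 h4 h5 h6).Arc u v →
      ¬ (u ∈ ({x,y} : Set V) ∧ v ∈ ({x,y} : Set V)) := by
  rintro u v harc ⟨hu, hv⟩
  simp only [Set.mem_insert_iff, Set.mem_singleton_iff] at hu hv
  rcases bSub_arc D x y z1 z2 h1 h2 h3 h4 h5 h6 harc with
    ⟨rfl,rfl⟩|⟨rfl,rfl⟩|⟨rfl,rfl⟩|⟨rfl,rfl⟩|⟨rfl,rfl⟩|⟨rfl,rfl⟩ <;> tauto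

/-! ### Set intersection helpers -/

lemma inter_tri_tri {x y z z' : V} (h : z ≠ z') :
    ({x,y,z} : Set V) ∩ {x,y,z'} = {x,y} := by
  ext u
  simp only [Set.mem_inter_iff, Set.mem_insert_iff, Set.mem_singleton_iff]
  constructor
  · rintro ⟨(rfl|rfl|rfl), hv⟩
    · exact Or.inl rfl
    · exact Or.inr rfl
    · rcases hv with h'|h'|h'
      · exact Or.inl h'
      · exact Or.inr h'
      · exact absurd h' h
  · rintro (rfl|rfl) <;> simp

lemma inter_b_tri {x y z1 z2 z' : V} (h1 : z' ≠ z1) (h2 : z' ≠ z2) :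
    ({x,y,z1,z2} : Set V) ∩ {x,y,z'} = {x,y} := by
  ext u
  simp only [Set.mem_inter_iff, Set.mem_insert_iff, Set.mem_singleton_iff]
  constructor
  · rintro ⟨hu, (rfl|rfl|rfl)⟩
    · exact Or.inl rfl
    · exact Or.inr rfl
    · rcases hu with h'|h'|h'|h'
      · exact Or.inl h'
      · exact Or.inr h'
      · exact absurd h' h1
      · exact absurd h' h2
  · rintro (rfl|rfl) <;> simp

lemma inter_pair_left {x y : V} {W : Set V} (hx : x ∈ W) (hy : y ∈ W) :
    ({x,y} : Set V) ∩ W = {x,y} :=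
  Set.inter_eq_left.mpr (by rintro u (rfl|rfl) <;> simpa)

lemma inter_pair_right {x y : V} {W : Set V} (hx : x ∈ W) (hy : y ∈ W) :
    W ∩ ({x,y} : Set V) = {x,y} := by
  rw [Set.inter_comm]; exact inter_pair_left hx hy

/-! ### The pairing relation -/

def POf (n : ℕ) (g : Fin (n/2) ⊕ Fin (n/2) → V) (u v : V) : Prop :=
  ∃ i, (u = g (Sum.inl i) ∧ v = g (Sum.inr i)) ∨ (u = g (Sum.inr i) ∧ v = g (Sum.inl i))

variable {n : ℕ} {g : Fin (n/2) ⊕ Fin (n/2) → V}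

lemma pof_symm {u v : V} (h : POf n g u v) : POf n g v u := by
  obtain ⟨i, h|h⟩ := h
  · exact ⟨i, Or.inr ⟨h.2, h.1⟩⟩
  · exact ⟨i, Or.inl ⟨h.2, h.1⟩⟩

lemma pof_ne (hg : Function.Injective g) {u v : V} (h : POf n g u v) : u ≠ v := by
  rintro rfl
  obtain ⟨i, ⟨ha, hb⟩|⟨ha, hb⟩⟩ := h <;> · have := hg (ha.symm.trans hb); simp_all

lemma pof_func (hg : Function.Injective g) {u v w : V} (h1 : POf n g u v)
    (h2 : POf n g u w) : v = w := by
  obtain ⟨i, hi⟩ := h1; obtain ⟨j, hj⟩ := h2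
  rcases hi with ⟨hu, hv⟩|⟨hu, hv⟩ <;> rcases hj with ⟨hu', hw⟩|⟨hu', hw⟩ <;>
    have hgg := hg (hu.symm.trans hu') <;> simp_all

lemma both_unpaired [Fintype V] (hn : Fintype.card V = n) (h4 : 4 ≤ n)
    (hg : Function.Injective g) {a b : V} (hab : a ≠ b)
    (ha : ∀ w, ¬ POf n g a w) (hb : ∀ w, ¬ POf n g b w) : False := by
  classical
  have hra : a ∉ Finset.univ.image g := by
    simp only [Finset.mem_image]
    rintro ⟨i, -, rfl⟩
    rcases i with i | i
    · exact ha _ ⟨i, Or.inl ⟨rfl, rfl⟩⟩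
    · exact ha _ ⟨i, Or.inr ⟨rfl, rfl⟩⟩
  have hrb : b ∉ Finset.univ.image g := by
    simp only [Finset.mem_image]
    rintro ⟨i, -, rfl⟩
    rcases i with i | i
    · exact hb _ ⟨i, Or.inl ⟨rfl, rfl⟩⟩
    · exact hb _ ⟨i, Or.inr ⟨rfl, rfl⟩⟩
  have h1 : (insert a (insert b (Finset.univ.image g))).card ≤ Fintype.card V := by
    rw [← Finset.card_univ]
    exact Finset.card_le_card (Finset.subset_univ _)
  rw [Finset.card_insert_of_notMem
      (by simp only [Finset.mem_insert]; push_neg; exact ⟨hab, hra⟩),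
    Finset.card_insert_of_notMem hrb,
    Finset.card_image_of_injective _ hg] at h1
  simp only [Finset.card_univ, Fintype.card_sum, Fintype.card_fin, hn] at h1
  omega

/-! ### The family set underlying `kappaS` -/

def KSet (D : Dgraph V) (S : Set V) : Set ℕ :=
  {p : ℕ | ∃ f : Fin p → Dgraph.StrongSub D,
    (∀ i, S ⊆ (f i).verts) ∧
    (∀ i j, i ≠ j → (f i).verts ∩ (f j).verts = S) ∧
    (∀ i j, i ≠ j → ∀ u v, ¬ ((f i).Arc u v ∧ (f j).Arc u v))}

lemma kappaS_eq (D : Dgraph V) (S : Set V) : D.kappaS S = sSup (KSet D S) := rfl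

lemma zero_mem_KSet (D : Dgraph V) (S : Set V) : 0 ∈ KSet D S :=
  ⟨Fin.elim0, fun i => i.elim0, fun i => i.elim0, fun i => i.elim0⟩

lemma count_aux [Fintype V] {D : Dgraph V} {p : ℕ} (f : Fin p → D.StrongSub)
    (x y : V) (T : Finset V) (hx : x ∈ T) (hy : y ∈ T)
    (hI : ∀ i j, i ≠ j → (f i).verts ∩ (f j).verts = ({x, y} : Set V))
    (hw : ∀ i, ∃ v, v ∈ (f i).verts ∧ v ∉ T) :
    p ≤ Fintype.card V - T.card := by
  classical
  choose w hw1 hw2 using hw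
  have hinj : Function.Injective w := by
    intro i j hij
    by_contra hne
    have hmem : w i ∈ (f i).verts ∩ (f j).verts := ⟨hw1 i, by rw [hij]; exact hw1 j⟩
    rw [hI i j hne] at hmem
    simp only [Set.mem_insert_iff, Set.mem_singleton_iff] at hmem
    rcases hmem with h|h
    · exact hw2 i (by rw [h]; exact hx)
    · exact hw2 i (by rw [h]; exact hy)
  have hsub : Finset.univ.image w ⊆ Finset.univ \ T := by
    intro v hv
    simp only [Finset.mem_image] at hv
    obtain ⟨i, -, rfl⟩ := hv
    simp only [Finset.mem_sdiff, Finset.mem_univ, true_and]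
    exact hw2 i
  have hc := Finset.card_le_card hsub
  rwa [Finset.card_image_of_injective _ hinj, Finset.card_univ, Fintype.card_fin,
    Finset.card_sdiff_of_subset (Finset.subset_univ T), Finset.card_univ] at hc

lemma KSet_bdd [Fintype V] {D : Dgraph V} {x y : V} (hxy : x ≠ y) :
    BddAbove (KSet D ({x, y} : Set V)) := by
  classical
  refine ⟨Fintype.card V, ?_⟩
  rintro p ⟨f, hS, hI, hA⟩
  have harcy : ∀ i : Fin p, (¬ ∃ v, v ∈ (f i).verts ∧ v ∉ ({x,y} : Set V)) →
      (f i).Arc x y := by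
    intro i hi
    push_neg at hi
    obtain ⟨t, htv, htx, harc⟩ :=
      first_arc (f i) (hS i (Set.mem_insert _ _)) (hS i (by simp)) hxy
    have := hi t htv
    simp only [Set.mem_insert_iff, Set.mem_singleton_iff] at this
    rcases this with rfl|rfl
    · exact absurd rfl htx
    · exact harc
  set w : Fin p → V := fun i =>
    if h : ∃ v, v ∈ (f i).verts ∧ v ∉ ({x,y} : Set V) then h.choose else x with hwdef
  have hinj : Function.Injective w := by
    intro i j hij
    by_contra hne
    by_cases hi : ∃ v, v ∈ (f i).verts ∧ v ∉ ({x,y} : Set V) <;>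
      by_cases hj : ∃ v, v ∈ (f j).verts ∧ v ∉ ({x,y} : Set V)
    · have h1 := hi.choose_spec
      have h2 := hj.choose_spec
      simp only [hwdef, dif_pos hi, dif_pos hj] at hij
      have hmm : hi.choose ∈ (f i).verts ∩ (f j).verts := ⟨h1.1, by rw [hij]; exact h2.1⟩
      rw [hI i j hne] at hmm
      exact h1.2 hmm
    · have h1 := hi.choose_spec
      simp only [hwdef, dif_pos hi, dif_neg hj] at hij
      exact h1.2 (by rw [hij]; exact Set.mem_insert x {y})
    · have h2 := hj.choose_spec
      simp only [hwdef, dif_pos hj, dif_neg hi] at hij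
      exact h2.2 (by rw [← hij]; exact Set.mem_insert x {y})
    · exact hA i j hne x y ⟨harcy i hi, harcy j hj⟩
  simpa using Fintype.card_le_of_injective w hinj


lemma constr [Fintype V] (hn : Fintype.card V = n) (hg : Function.Injective g)
    {D : Dgraph V} (hD : ∀ u v, D.Arc u v ↔ u ≠ v ∧ ¬ POf n g u v)
    (x y : V) (hxy : x ≠ y) : (n - 2) ∈ KSet D ({x, y} : Set V) := by
  classical
  have arc : ∀ u v : V, u ≠ v → ¬ POf n g u v → D.Arc u v :=
    fun u v hne hP => (hD u v).2 ⟨hne, hP⟩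
  suffices h : ∃ F : ∀ z : V, z ≠ x → z ≠ y → Dgraph.StrongSub D,
      (∀ z h1 h2, ({x,y} : Set V) ⊆ (F z h1 h2).verts) ∧
      (∀ z h1 h2 z' h1' h2', z ≠ z' →
        (F z h1 h2).verts ∩ (F z' h1' h2').verts = ({x,y} : Set V)) ∧
      (∀ z h1 h2 z' h1' h2', z ≠ z' →
        ∀ u v, ¬ ((F z h1 h2).Arc u v ∧ (F z' h1' h2').Arc u v)) by
    obtain ⟨F, hF1, hF2, hF3⟩ := h
    have hcard : Fintype.card {w : V // w ∈ (Finset.univ \ {x, y} : Finset V)} = n - 2 := by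
      rw [Fintype.card_coe, Finset.card_sdiff_of_subset (Finset.subset_univ _), Finset.card_univ, hn,
        Finset.card_insert_of_notMem (by simp [hxy]), Finset.card_singleton]
    let e := (Fintype.equivFinOfCardEq hcard).symm
    have hmem : ∀ i : Fin (n - 2), (↑(e i) : V) ≠ x ∧ (↑(e i) : V) ≠ y := by
      intro i
      have h2 := (e i).2
      simp only [Finset.mem_sdiff, Finset.mem_univ, Finset.mem_insert,
        Finset.mem_singleton, true_and] at h2
      exact ⟨fun h => h2 (Or.inl h), fun h => h2 (Or.inr h)⟩
    have hne : ∀ i j : Fin (n - 2), i ≠ j → (↑(e i) : V) ≠ ↑(e j) :=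
      fun i j hij h => hij (e.injective (Subtype.ext h))
    exact ⟨fun i => F (e i) (hmem i).1 (hmem i).2, fun i => hF1 _ _ _,
      fun i j hij => hF2 _ _ _ _ _ _ (hne i j hij),
      fun i j hij => hF3 _ _ _ _ _ _ (hne i j hij)⟩
  by_cases hx : ∃ w, w ≠ y ∧ POf n g x w
  · obtain ⟨z1, hz1y, hP1⟩ := hx
    have hxz1 : x ≠ z1 := pof_ne hg hP1
    have hPxy : ¬ POf n g x y := fun h => hz1y (pof_func hg hP1 h)
    have hPyx : ¬ POf n g y x := fun h => hPxy (pof_symm h)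
    have aXY : D.Arc x y := arc x y hxy hPxy
    have aYX : D.Arc y x := arc y x hxy.symm hPyx
    by_cases hy : ∃ w, w ≠ x ∧ POf n g y w
    · -- Scenario S4 : both x and y have partners z1 z2 outside {x,y}
      obtain ⟨z2, hz2x, hP2⟩ := hy
      have hyz2 : y ≠ z2 := pof_ne hg hP2
      have hz12 : z1 ≠ z2 := by
        rintro rfl
        exact hxy (pof_func hg (pof_symm hP1) (pof_symm hP2))
      have hPxz2 : ¬ POf n g x z2 := fun h => hz12 (pof_func hg hP1 h)
      have hPz2z1 : ¬ POf n g z2 z1 := fun h => hz1y ((pof_func hg (pof_symm hP2) h).symm)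
      have hPz1y : ¬ POf n g z1 y := fun h => hxy (pof_func hg (pof_symm hP1) h)
      have b1 : D.Arc x z2 := arc _ _ (fun h => hz2x h.symm) hPxz2
      have b2 : D.Arc z2 z1 := arc _ _ (fun h => hz12 h.symm) hPz2z1
      have b3 : D.Arc z1 y := arc _ _ hz1y hPz1y
      have b4 : D.Arc y z1 := arc _ _ (fun h => hz1y h.symm) (fun h => hPz1y (pof_symm h))
      have b5 : D.Arc z1 z2 := arc _ _ hz12 (fun h => hPz2z1 (pof_symm h))
      have b6 : D.Arc z2 x := arc _ _ hz2x (fun h => hPxz2 (pof_symm h))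
      have t1 : ∀ z : V, z ≠ x → z ≠ y → ¬ z = z1 → ¬ z = z2 →
          D.Arc x z ∧ D.Arc z y ∧ D.Arc y z ∧ D.Arc z x := by
        intro z hzx hzy hzz1 hzz2
        have hPxz : ¬ POf n g x z := fun h => hzz1 (pof_func hg h hP1)
        have hPyz : ¬ POf n g y z := fun h => hzz2 (pof_func hg h hP2)
        exact ⟨arc _ _ (fun h => hzx h.symm) hPxz, arc _ _ hzy (fun h => hPyz (pof_symm h)),
          arc _ _ (fun h => hzy h.symm) hPyz, arc _ _ hzx (fun h => hPxz (pof_symm h))⟩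
      refine ⟨fun z h1 h2 =>
        if hA : z = z1 then pairSub D x y aXY aYX
        else if hB : z = z2 then bSub D x y z1 z2 b1 b2 b3 b4 b5 b6
        else triSub D x y z (t1 z h1 h2 hA hB).1 (t1 z h1 h2 hA hB).2.1
          (t1 z h1 h2 hA hB).2.2.1 (t1 z h1 h2 hA hB).2.2.2, ?_, ?_, ?_⟩
      · intro z h1 h2
        beta_reduce
        by_cases hA : z = z1
        · rw [dif_pos hA, pairSub_verts]
        · rw [dif_neg hA]
          by_cases hB : z = z2
          · rw [dif_pos hB, bSub_verts]
            intro u hu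
            simp only [Set.mem_insert_iff, Set.mem_singleton_iff] at hu ⊢
            tauto
          · rw [dif_neg hB, triSub_verts]
            intro u hu
            simp only [Set.mem_insert_iff, Set.mem_singleton_iff] at hu ⊢
            tauto
      · intro z h1 h2 z' h1' h2' hzz'
        beta_reduce
        by_cases hA : z = z1
        · rw [dif_pos hA, pairSub_verts]
          by_cases hA' : z' = z1
          · exact absurd (hA.trans hA'.symm) hzz'
          · rw [dif_neg hA']
            by_cases hB' : z' = z2
            · rw [dif_pos hB', bSub_verts]
              exact inter_pair_left (by simp) (by simp)
            · rw [dif_neg hB', triSub_verts]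
              exact inter_pair_left (by simp) (by simp)
        · rw [dif_neg hA]
          by_cases hB : z = z2
          · rw [dif_pos hB, bSub_verts]
            by_cases hA' : z' = z1
            · rw [dif_pos hA', pairSub_verts]
              exact inter_pair_right (by simp) (by simp)
            · rw [dif_neg hA']
              by_cases hB' : z' = z2
              · exact absurd (hB.trans hB'.symm) hzz'
              · rw [dif_neg hB', triSub_verts]
                exact inter_b_tri hA' hB'
          · rw [dif_neg hB, triSub_verts]
            by_cases hA' : z' = z1
            · rw [dif_pos hA', pairSub_verts]
              exact inter_pair_right (by simp) (by simp)
            · rw [dif_neg hA']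
              by_cases hB' : z' = z2
              · rw [dif_pos hB', bSub_verts, Set.inter_comm]
                exact inter_b_tri hA hB
              · rw [dif_neg hB', triSub_verts]
                exact inter_tri_tri hzz'
      · intro z h1 h2 z' h1' h2' hzz'
        beta_reduce
        by_cases hA : z = z1
        · rw [dif_pos hA]
          by_cases hA' : z' = z1
          · exact absurd (hA.trans hA'.symm) hzz'
          · rw [dif_neg hA']
            by_cases hB' : z' = z2
            · rw [dif_pos hB']
              exact disj_of_noS'
                (by rw [pairSub_verts, bSub_verts]; exact inter_pair_left (by simp) (by simp))
                (bSub_noS hxz1.symm hz1y hz2x hyz2.symm _ _ _ _ _ _)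
            · rw [dif_neg hB']
              exact disj_of_noS'
                (by rw [pairSub_verts, triSub_verts]; exact inter_pair_left (by simp) (by simp))
                (triSub_noS h1' h2' _ _ _ _)
        · rw [dif_neg hA]
          by_cases hB : z = z2
          · rw [dif_pos hB]
            by_cases hA' : z' = z1
            · rw [dif_pos hA']
              exact disj_of_noS
                (by rw [bSub_verts, pairSub_verts]; exact inter_pair_right (by simp) (by simp))
                (bSub_noS hxz1.symm hz1y hz2x hyz2.symm _ _ _ _ _ _)
            · rw [dif_neg hA']
              by_cases hB' : z' = z2
              · exact absurd (hB.trans hB'.symm) hzz'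
              · rw [dif_neg hB']
                exact disj_of_noS'
                  (by rw [bSub_verts, triSub_verts]; exact inter_b_tri hA' hB')
                  (triSub_noS h1' h2' _ _ _ _)
          · rw [dif_neg hB]
            refine disj_of_noS ?_ (triSub_noS h1 h2 _ _ _ _)
            by_cases hA' : z' = z1
            · rw [dif_pos hA', triSub_verts, pairSub_verts]
              exact inter_pair_right (by simp) (by simp)
            · rw [dif_neg hA']
              by_cases hB' : z' = z2
              · rw [dif_pos hB', triSub_verts, bSub_verts, Set.inter_comm]
                exact inter_b_tri hA hB
              · rw [dif_neg hB', triSub_verts, triSub_verts]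
                exact inter_tri_tri hzz'
    · -- Scenario S2 : x has partner z1, y has none
      have hyN : ∀ w, ¬ POf n g y w := by
        intro w hw
        by_cases hwx : w = x
        · subst hwx; exact hPxy (pof_symm hw)
        · exact hy ⟨w, hwx, hw⟩
      have c2 : D.Arc y z1 := arc _ _ (fun h => hz1y h.symm) (hyN z1)
      have c3 : D.Arc z1 y := arc _ _ hz1y (fun h => hyN z1 (pof_symm h))
      have t1 : ∀ z : V, z ≠ x → z ≠ y → ¬ z = z1 →
          D.Arc x z ∧ D.Arc z y ∧ D.Arc y z ∧ D.Arc z x := by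
        intro z hzx hzy hzz1
        have hPxz : ¬ POf n g x z := fun h => hzz1 (pof_func hg h hP1)
        have hPyz : ¬ POf n g y z := hyN z
        exact ⟨arc _ _ (fun h => hzx h.symm) hPxz, arc _ _ hzy (fun h => hPyz (pof_symm h)),
          arc _ _ (fun h => hzy h.symm) hPyz, arc _ _ hzx (fun h => hPxz (pof_symm h))⟩
      refine ⟨fun z h1 h2 =>
        if hA : z = z1 then cSub D x y z1 aXY c2 c3 aYX
        else triSub D x y z (t1 z h1 h2 hA).1 (t1 z h1 h2 hA).2.1
          (t1 z h1 h2 hA).2.2.1 (t1 z h1 h2 hA).2.2.2, ?_, ?_, ?_⟩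
      · intro z h1 h2
        beta_reduce
        by_cases hA : z = z1
        · rw [dif_pos hA, cSub_verts]
          intro u hu
          simp only [Set.mem_insert_iff, Set.mem_singleton_iff] at hu ⊢
          tauto
        · rw [dif_neg hA, triSub_verts]
          intro u hu
          simp only [Set.mem_insert_iff, Set.mem_singleton_iff] at hu ⊢
          tauto
      · intro z h1 h2 z' h1' h2' hzz'
        beta_reduce
        by_cases hA : z = z1
        · rw [dif_pos hA, cSub_verts]
          by_cases hA' : z' = z1
          · exact absurd (hA.trans hA'.symm) hzz'
          · rw [dif_neg hA', triSub_verts]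
            exact inter_tri_tri (fun h => hA' h.symm)
        · rw [dif_neg hA, triSub_verts]
          by_cases hA' : z' = z1
          · rw [dif_pos hA', cSub_verts]
            exact inter_tri_tri hA
          · rw [dif_neg hA', triSub_verts]
            exact inter_tri_tri hzz'
      · intro z h1 h2 z' h1' h2' hzz'
        beta_reduce
        by_cases hA : z = z1
        · rw [dif_pos hA]
          by_cases hA' : z' = z1
          · exact absurd (hA.trans hA'.symm) hzz'
          · rw [dif_neg hA']
            exact disj_of_noS'
              (by rw [cSub_verts, triSub_verts]; exact inter_tri_tri (fun h => hA' h.symm))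
              (triSub_noS h1' h2' _ _ _ _)
        · rw [dif_neg hA]
          refine disj_of_noS ?_ (triSub_noS h1 h2 _ _ _ _)
          by_cases hA' : z' = z1
          · rw [dif_pos hA', triSub_verts, cSub_verts]
            exact inter_tri_tri hA
          · rw [dif_neg hA', triSub_verts, triSub_verts]
            exact inter_tri_tri hzz'
  · by_cases hy : ∃ w, w ≠ x ∧ POf n g y w
    · -- Scenario S3 : y has partner z2, x has none
      obtain ⟨z2, hz2x, hP2⟩ := hy
      have hyz2 : y ≠ z2 := pof_ne hg hP2
      have hxN : ∀ w, ¬ POf n g x w := by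
        intro w hw
        by_cases hwy : w = y
        · subst hwy
          exact hz2x (pof_func hg hP2 (pof_symm hw))
        · exact hx ⟨w, hwy, hw⟩
      have hPxy : ¬ POf n g x y := hxN y
      have hPyx : ¬ POf n g y x := fun h => hPxy (pof_symm h)
      have aXY : D.Arc x y := arc x y hxy hPxy
      have aYX : D.Arc y x := arc y x hxy.symm hPyx
      have c2 : D.Arc x z2 := arc _ _ (fun h => hz2x h.symm) (hxN z2)
      have c3 : D.Arc z2 x := arc _ _ hz2x (fun h => hxN z2 (pof_symm h))
      have t1 : ∀ z : V, z ≠ x → z ≠ y → ¬ z = z2 →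
          D.Arc x z ∧ D.Arc z y ∧ D.Arc y z ∧ D.Arc z x := by
        intro z hzx hzy hzz2
        have hPxz : ¬ POf n g x z := hxN z
        have hPyz : ¬ POf n g y z := fun h => hzz2 (pof_func hg h hP2)
        exact ⟨arc _ _ (fun h => hzx h.symm) hPxz, arc _ _ hzy (fun h => hPyz (pof_symm h)),
          arc _ _ (fun h => hzy h.symm) hPyz, arc _ _ hzx (fun h => hPxz (pof_symm h))⟩
      refine ⟨fun z h1 h2 =>
        if hA : z = z2 then cSub D y x z2 aYX c2 c3 aXY
        else triSub D x y z (t1 z h1 h2 hA).1 (t1 z h1 h2 hA).2.1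
          (t1 z h1 h2 hA).2.2.1 (t1 z h1 h2 hA).2.2.2, ?_, ?_, ?_⟩
      · intro z h1 h2
        beta_reduce
        by_cases hA : z = z2
        · rw [dif_pos hA, cSub_verts]
          intro u hu
          simp only [Set.mem_insert_iff, Set.mem_singleton_iff] at hu ⊢
          tauto
        · rw [dif_neg hA, triSub_verts]
          intro u hu
          simp only [Set.mem_insert_iff, Set.mem_singleton_iff] at hu ⊢
          tauto
      · intro z h1 h2 z' h1' h2' hzz'
        beta_reduce
        by_cases hA : z = z2
        · rw [dif_pos hA, cSub_verts, Set.insert_comm y x {z2}]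
          by_cases hA' : z' = z2
          · exact absurd (hA.trans hA'.symm) hzz'
          · rw [dif_neg hA', triSub_verts]
            exact inter_tri_tri (fun h => hA' h.symm)
        · rw [dif_neg hA, triSub_verts]
          by_cases hA' : z' = z2
          · rw [dif_pos hA', cSub_verts, Set.insert_comm y x {z2}]
            exact inter_tri_tri hA
          · rw [dif_neg hA', triSub_verts]
            exact inter_tri_tri hzz'
      · intro z h1 h2 z' h1' h2' hzz'
        beta_reduce
        by_cases hA : z = z2
        · rw [dif_pos hA]
          by_cases hA' : z' = z2
          · exact absurd (hA.trans hA'.symm) hzz'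
          · rw [dif_neg hA']
            exact disj_of_noS'
              (by rw [cSub_verts, Set.insert_comm y x {z2}, triSub_verts]
                  exact inter_tri_tri (fun h => hA' h.symm))
              (triSub_noS h1' h2' _ _ _ _)
        · rw [dif_neg hA]
          refine disj_of_noS ?_ (triSub_noS h1 h2 _ _ _ _)
          by_cases hA' : z' = z2
          · rw [dif_pos hA', triSub_verts, cSub_verts, Set.insert_comm y x {z2}]
            exact inter_tri_tri hA
          · rw [dif_neg hA', triSub_verts, triSub_verts]
            exact inter_tri_tri hzz'
    · -- Scenario S1 : neither has an outside partner
      have t1 : ∀ z : V, z ≠ x → z ≠ y →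
          D.Arc x z ∧ D.Arc z y ∧ D.Arc y z ∧ D.Arc z x := by
        intro z hzx hzy
        have hPxz : ¬ POf n g x z := fun h => hx ⟨z, hzy, h⟩
        have hPyz : ¬ POf n g y z := fun h => hy ⟨z, hzx, h⟩
        exact ⟨arc _ _ (fun h => hzx h.symm) hPxz, arc _ _ hzy (fun h => hPyz (pof_symm h)),
          arc _ _ (fun h => hzy h.symm) hPyz, arc _ _ hzx (fun h => hPxz (pof_symm h))⟩
      refine ⟨fun z h1 h2 => triSub D x y z (t1 z h1 h2).1 (t1 z h1 h2).2.1
        (t1 z h1 h2).2.2.1 (t1 z h1 h2).2.2.2, ?_, ?_, ?_⟩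
      · intro z h1 h2
        beta_reduce
        rw [triSub_verts]
        intro u hu
        simp only [Set.mem_insert_iff, Set.mem_singleton_iff] at hu ⊢
        tauto
      · intro z h1 h2 z' h1' h2' hzz'
        beta_reduce
        rw [triSub_verts, triSub_verts]
        exact inter_tri_tri hzz'
      · intro z h1 h2 z' h1' h2' hzz'
        exact disj_of_noS (by beta_reduce; rw [triSub_verts, triSub_verts]; exact inter_tri_tri hzz')
          (triSub_noS h1 h2 _ _ _ _)

lemma KSet_le_special [Fintype V] (hn : Fintype.card V = n) (hg : Function.Injective g)
    {D : Dgraph V} (hD : ∀ u v, D.Arc u v ↔ u ≠ v ∧ ¬ POf n g u v)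
    {x y : V} (hP : POf n g x y) :
    ∀ p ∈ KSet D ({x,y} : Set V), p ≤ n - 2 := by
  rintro p ⟨f, hS, hI, hA⟩
  classical
  have hxy : x ≠ y := pof_ne hg hP
  have hw : ∀ i, ∃ v, v ∈ (f i).verts ∧ v ∉ ({x,y} : Finset V) := by
    intro i
    by_contra hcon
    push_neg at hcon
    obtain ⟨t, htv, htx, harc⟩ :=
      first_arc (f i) (hS i (Set.mem_insert _ _)) (hS i (by simp)) hxy
    have hmem := hcon t htv
    simp only [Finset.mem_insert, Finset.mem_singleton] at hmem
    rcases hmem with rfl|rfl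
    · exact htx rfl
    · exact ((hD x t).1 ((f i).arc_sub x t harc)).2 hP
  have hc := count_aux f x y {x,y} (by simp) (by simp) hI hw
  rwa [hn, Finset.card_insert_of_notMem (by simp [hxy]), Finset.card_singleton] at hc

lemma kappaS_special [Fintype V] (hn : Fintype.card V = n) (hg : Function.Injective g)
    {D : Dgraph V} (hD : ∀ u v, D.Arc u v ↔ u ≠ v ∧ ¬ POf n g u v)
    {x y : V} (hP : POf n g x y) :
    D.kappaS ({x,y} : Set V) = n - 2 := by
  rw [kappaS_eq]
  refine le_antisymm (csSup_le ⟨0, zero_mem_KSet D _⟩ (KSet_le_special hn hg hD hP)) ?_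
  exact le_csSup (KSet_bdd (pof_ne hg hP)) (constr hn hg hD x y (pof_ne hg hP))

lemma KSet_le_of_witness [Fintype V] {n : ℕ} {D' : Dgraph V} {x y c : V}
    (hn : Fintype.card V = n) (hxy : x ≠ y) (hxc : x ≠ c) (hyc : y ≠ c)
    (hwit : ∀ G : D'.StrongSub, x ∈ G.verts → y ∈ G.verts →
      ∃ v ∈ G.verts, v ≠ x ∧ v ≠ y ∧ v ≠ c) :
    ∀ p ∈ KSet D' ({x,y} : Set V), p ≤ n - 3 := by
  rintro p ⟨f, hS, hI, hA⟩
  classical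
  have hw : ∀ i, ∃ v, v ∈ (f i).verts ∧ v ∉ ({x,y,c} : Finset V) := by
    intro i
    obtain ⟨v, hv1, hv2, hv3, hv4⟩ := hwit (f i) (hS i (by simp)) (hS i (by simp))
    exact ⟨v, hv1, by simp [hv2, hv3, hv4]⟩
  have hc := count_aux f x y {x,y,c} (by simp) (by simp) hI hw
  rwa [hn, Finset.card_insert_of_notMem (by simp [hxy, hxc]),
    Finset.card_insert_of_notMem (by simp [hyc]), Finset.card_singleton] at hc

lemma part2 [Fintype V] (hn : Fintype.card V = n) (h4 : 4 ≤ n)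
    (hg : Function.Injective g)
    {D : Dgraph V} (hD : ∀ u v, D.Arc u v ↔ u ≠ v ∧ ¬ POf n g u v)
    (e : V × V) (he : D.Arc e.1 e.2) :
    (D.deleteArc e).kappa 2 ≤ n - 3 := by
  classical
  obtain ⟨hne, hnP⟩ := (hD e.1 e.2).1 he
  have harc' : ∀ u v, (D.deleteArc e).Arc u v ↔ (D.Arc u v ∧ (u, v) ≠ e) := fun u v => Iff.rfl
  -- produce a suitable pair {x,y} and forbidden vertex c
  have key : ∃ x y c : V, x ≠ y ∧ x ≠ c ∧ y ≠ c ∧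
      (∀ G : (D.deleteArc e).StrongSub, x ∈ G.verts → y ∈ G.verts →
        ∃ v ∈ G.verts, v ≠ x ∧ v ≠ y ∧ v ≠ c) := by
    by_cases ha : ∃ w, POf n g e.1 w
    · obtain ⟨a', hPa⟩ := ha
      have haa' : e.1 ≠ a' := pof_ne hg hPa
      have ha'b : a' ≠ e.2 := fun h => hnP (h ▸ hPa)
      refine ⟨e.1, a', e.2, haa', hne, ha'b, ?_⟩
      intro G hxm hym
      by_contra hcon
      push_neg at hcon
      obtain ⟨t, htv, hta, harc⟩ := first_arc G hxm hym haa'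
      obtain ⟨hDt, hnet⟩ := G.arc_sub _ _ harc
      by_cases ht : t = a'
      · subst ht; exact ((hD e.1 t).1 hDt).2 hPa
      · exact hnet (by rw [hcon t htv hta ht])
    · have hb : ∃ w, POf n g e.2 w := by
        by_contra hb
        push_neg at ha hb
        exact both_unpaired hn h4 hg hne ha hb
      obtain ⟨b', hPb⟩ := hb
      have hbb' : e.2 ≠ b' := pof_ne hg hPb
      have hb'a : b' ≠ e.1 := by
        rintro rfl
        exact hnP (pof_symm hPb)
      refine ⟨e.2, b', e.1, hbb', hne.symm, hb'a, ?_⟩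
      intro G hxm hym
      by_contra hcon
      push_neg at hcon
      obtain ⟨t, htv, htb, harc⟩ := last_arc G hym hxm (Ne.symm hbb')
      obtain ⟨hDt, hnet⟩ := G.arc_sub _ _ harc
      by_cases ht : t = b'
      · subst ht; exact ((hD t e.2).1 hDt).2 (pof_symm hPb)
      · exact hnet (by rw [hcon t htv htb ht])
  obtain ⟨x, y, c, hxy, hxc, hyc, hwit⟩ := key
  have hks : (D.deleteArc e).kappaS (↑({x, y} : Finset V) : Set V) ≤ n - 3 := by
    rw [show ((↑({x, y} : Finset V)) : Set V) = ({x, y} : Set V) by simp]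
    rw [kappaS_eq]
    exact csSup_le ⟨0, zero_mem_KSet _ _⟩ (KSet_le_of_witness hn hxy hxc hyc hwit)
  refine le_trans (Nat.sInf_le ?_) hks
  exact ⟨{x, y}, by rw [Finset.card_insert_of_notMem (by simp [hxy]),
    Finset.card_singleton], rfl⟩

end StmtAux

/-- For `n ≥ 4`, the digraph obtained from the complete digraph on `n` vertices
by deleting `⌊n/2⌋` vertex-disjoint directed 2-cycles satisfies `κ₂(D) = n - 2`,
and `κ₂(D - e) ≤ n - 3` for every arc `e` of `D`. The 2-cycles are on the pairs
`{g (inl i), g (inr i)}`, `i < ⌊n/2⌋`, with `g` injective. -/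
theorem stmt10 {V : Type} [Fintype V] (n : ℕ)
    (hn : Fintype.card V = n) (h4 : 4 ≤ n)
    (g : Fin (n / 2) ⊕ Fin (n / 2) → V) (hg : Function.Injective g) :
    let M : Set (V × V) := {p | ∃ i : Fin (n / 2),
      p = (g (Sum.inl i), g (Sum.inr i)) ∨ p = (g (Sum.inr i), g (Sum.inl i))}
    let D : Dgraph V := ⟨fun u v => u ≠ v ∧ (u, v) ∉ M, fun v h => h.1 rfl⟩
    D.kappa 2 = n - 2 ∧
      ∀ e : V × V, D.Arc e.1 e.2 → (D.deleteArc e).kappa 2 ≤ n - 3 := by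
  intro M D
  classical
  have hD : ∀ u v, D.Arc u v ↔ u ≠ v ∧ ¬ POf n g u v := by
    intro u v
    constructor
    · rintro ⟨h1, h2⟩
      refine ⟨h1, fun hP => h2 ?_⟩
      obtain ⟨i, hi⟩ := hP
      rcases hi with ⟨ha, hb⟩|⟨ha, hb⟩
      · exact ⟨i, Or.inl (by rw [ha, hb])⟩
      · exact ⟨i, Or.inr (by rw [ha, hb])⟩
    · rintro ⟨h1, h2⟩
      refine ⟨h1, fun hM => h2 ?_⟩
      obtain ⟨i, hi⟩ := hM
      rcases hi with hi|hi
      · exact ⟨i, Or.inl ⟨congrArg Prod.fst hi, congrArg Prod.snd hi⟩⟩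
      · exact ⟨i, Or.inr ⟨congrArg Prod.fst hi, congrArg Prod.snd hi⟩⟩
  constructor
  · have hhalf : 0 < n / 2 := by omega
    set i0 : Fin (n/2) := ⟨0, hhalf⟩ with hi0
    have hP0 : POf n g (g (Sum.inl i0)) (g (Sum.inr i0)) := ⟨i0, Or.inl ⟨rfl, rfl⟩⟩
    have hxy0 : g (Sum.inl i0) ≠ g (Sum.inr i0) := pof_ne hg hP0
    show sInf _ = n - 2
    apply le_antisymm
    · apply Nat.sInf_le
      refine ⟨{g (Sum.inl i0), g (Sum.inr i0)}, ?_, ?_⟩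
      · rw [Finset.card_insert_of_notMem (by simp [hxy0]), Finset.card_singleton]
      · rw [show ((↑({g (Sum.inl i0), g (Sum.inr i0)} : Finset V)) : Set V) =
            ({g (Sum.inl i0), g (Sum.inr i0)} : Set V) by simp]
        exact kappaS_special hn hg hD hP0
    · refine le_csInf ⟨_, ⟨{g (Sum.inl i0), g (Sum.inr i0)},
        by rw [Finset.card_insert_of_notMem (by simp [hxy0]), Finset.card_singleton], rfl⟩⟩ ?_
      rintro m ⟨S, hS2, rfl⟩
      obtain ⟨x, y, hxy, rfl⟩ := Finset.card_eq_two.mp hS2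
      rw [show ((↑({x, y} : Finset V)) : Set V) = ({x, y} : Set V) by simp]
      rw [kappaS_eq]
      exact le_csSup (KSet_bdd hxy) (constr hn hg hD x y hxy)
  · intro e he
    exact part2 hn h4 hg hD e he
end

section
/- Let n ≥ 5 and let D' = ↔K_n − M' where ↔K_n[M'] is a directed path of length 3 with an extra 2-cycle on its middle edge, specifically M' = {u₁u₂, u₂u₄, u₄u₂, u₄u₃} or M' = {u₁u₂, u₂u₃, u₃u₂, u₃u₄} for distinct vertices u₁,u₂,u₃,u₄. Then κ_2(D') ≤ n−3. -/
/-- For `n ≥ 5`, if `D' = ↔K_n - M'` where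
`M' = {u₁u₂, u₂u₄, u₄u₂, u₄u₃}` or `M' = {u₁u₂, u₂u₃, u₃u₂, u₃u₄}` for distinct
vertices `u₁, u₂, u₃, u₄`, then `κ₂(D') ≤ n - 3`. -/
theorem stmt11 {V : Type} [Fintype V] (n : ℕ)
    (hn : Fintype.card V = n) (h5 : 5 ≤ n)
    (u1 u2 u3 u4 : V)
    (h12 : u1 ≠ u2) (h13 : u1 ≠ u3) (h14 : u1 ≠ u4)
    (h23 : u2 ≠ u3) (h24 : u2 ≠ u4) (h34 : u3 ≠ u4)
    (M' : Set (V × V))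
    (hM : M' = {(u1, u2), (u2, u4), (u4, u2), (u4, u3)} ∨
          M' = {(u1, u2), (u2, u3), (u3, u2), (u3, u4)})
    (D' : Dgraph V) (hD' : ∀ u v, D'.Arc u v ↔ u ≠ v ∧ (u, v) ∉ M') :
    D'.kappa 2 ≤ n - 3 := by
  classical
  obtain ⟨w, hw1, hw2, hma, hmb⟩ :
      ∃ w : V, w ≠ u1 ∧ w ≠ u2 ∧ (u1, u2) ∈ M' ∧ (w, u2) ∈ M' := by
    rcases hM with h | h
    · exact ⟨u4, h14.symm, h24.symm, by simp [h], by simp [h]⟩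
    · exact ⟨u3, h13.symm, h23.symm, by simp [h], by simp [h]⟩
  have hScard : ({u1, u2} : Finset V).card = 2 := by
    rw [Finset.card_insert_of_notMem (by simp [h12]), Finset.card_singleton]
  have hk : D'.kappa 2 ≤ D'.kappaS ↑({u1, u2} : Finset V) :=
    Nat.sInf_le ⟨{u1, u2}, hScard, rfl⟩
  refine hk.trans ?_
  have hcoe : (↑({u1, u2} : Finset V) : Set V) = {u1, u2} := by simp
  rw [Dgraph.kappaS, hcoe]
  apply csSup_le'
  rintro p ⟨f, hsub, hint, -⟩
  have key : ∀ i, ∃ x, x ∈ (f i).verts ∧ x ∉ ({u1, u2, w} : Set V) := by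
    intro i
    by_contra hcon
    push_neg at hcon
    have hu1 : u1 ∈ (f i).verts := hsub i (by simp)
    have hu2 : u2 ∈ (f i).verts := hsub i (by simp)
    have hreach := (f i).strong u1 hu1 u2 hu2
    have inv : ∀ x, Relation.ReflTransGen (f i).Arc u1 x → x = u1 ∨ x = w := by
      intro x hx
      induction hx with
      | refl => exact Or.inl rfl
      | tail hab harc ih =>
        rename_i b c
        have hD : D'.Arc b c := (f i).arc_sub b c harc
        rw [hD'] at hD
        have hcmem : c ∈ ({u1, u2, w} : Set V) := hcon c ((f i).arc_mem b c harc).2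
        rcases ih with rfl | rfl
        · -- b = u1
          rcases hcmem with rfl | rfl | rfl
          · exact Or.inl rfl
          · exact absurd hma hD.2
          · exact Or.inr rfl
        · -- b = w
          rcases hcmem with rfl | rfl | rfl
          · exact Or.inl rfl
          · exact absurd hmb hD.2
          · exact absurd rfl hD.1
    rcases inv u2 hreach with h | h
    · exact h12 h.symm
    · exact hw2 h.symm
  choose g hg1 hg2 using key
  have hmaps : ∀ i ∈ (Finset.univ : Finset (Fin p)),
      g i ∈ (Finset.univ \ {u1, u2, w} : Finset V) := by
    intro i _
    simp only [Finset.mem_sdiff, Finset.mem_univ, true_and, Finset.mem_insert,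
      Finset.mem_singleton]
    intro h
    exact hg2 i (by simpa using h)
  have hinj : Set.InjOn g (Finset.univ : Finset (Fin p)) := by
    intro i _ j _ hij
    by_contra hne
    have hx : g i ∈ (f i).verts ∩ (f j).verts := ⟨hg1 i, hij ▸ hg1 j⟩
    rw [hint i j hne] at hx
    simp only [Set.mem_insert_iff, Set.mem_singleton_iff] at hx
    exact hg2 i (by simp only [Set.mem_insert_iff, Set.mem_singleton_iff]; tauto)
  have hle := Finset.card_le_card_of_injOn g hmaps hinj
  have hsub3 : ({u1, u2, w} : Finset V) ⊆ Finset.univ := Finset.subset_univ _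
  have hc3 : ({u1, u2, w} : Finset V).card = 3 := by
    rw [Finset.card_insert_of_notMem (by simp [h12, Ne.symm hw1]),
      Finset.card_insert_of_notMem (by simp [Ne.symm hw2]), Finset.card_singleton]
  rw [Finset.card_univ, Finset.card_sdiff_of_subset hsub3, hc3, Finset.card_univ, hn] at hle
  simpa using hle
end

section
/- For every 2 ≤ k ≤ n, f(n,k,1) = n: the directed cycle on n vertices is minimally strong subgraph (k,1)-connected and has the minimum possible number of arcs. -/
namespace Aux
open Dgraph

theorem cycArc_iff (n : ℕ) [NeZero n] (u v : Fin n) :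
    ((u : ℕ) + 1 = v ∨ ((u : ℕ) = n - 1 ∧ (v : ℕ) = 0)) ↔ v = u + 1 := by
  have hn : 1 ≤ n := Nat.one_le_iff_ne_zero.mpr (NeZero.ne n)
  have hu := u.isLt
  have hv := v.isLt
  have h1 : ((u + 1 : Fin n) : ℕ) = ((u : ℕ) + 1) % n := by
    rw [Fin.add_def, Fin.val_one']
    rcases Nat.eq_or_lt_of_le hn with h | h
    · subst h; omega
    · rw [Nat.mod_eq_of_lt h]
  rw [Fin.ext_iff, h1]
  rcases Nat.lt_or_ge ((u:ℕ)+1) n with h | h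
  · rw [Nat.mod_eq_of_lt h]; omega
  · have : (u:ℕ) + 1 = n := by omega
    rw [this, Nat.mod_self]; omega

theorem sub_one_val (n : ℕ) [NeZero n] (x : Fin n) (hx : x ≠ 0) :
    ((x - 1 : Fin n) : ℕ) = (x : ℕ) - 1 := by
  have hn : 1 ≤ n := Nat.one_le_iff_ne_zero.mpr (NeZero.ne n)
  have hx1 : 1 ≤ (x : ℕ) := by
    rcases Nat.eq_zero_or_pos (x : ℕ) with h | h
    · exact absurd (Fin.ext (by simp [h])) hx
    · omega
  have hlt := x.isLt
  rw [Fin.sub_def, Fin.val_one']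
  rcases Nat.eq_or_lt_of_le hn with h | h
  · omega
  · rw [Nat.mod_eq_of_lt h]
    show (n - 1 + (x:ℕ)) % n = (x:ℕ) - 1
    have e : n - 1 + (x : ℕ) = ((x:ℕ) - 1) + n := by omega
    rw [e, Nat.add_mod_right, Nat.mod_eq_of_lt (by omega)]

/-- The defining set of `kappaS`. -/
def kSet {V : Type} (D : Dgraph V) (S : Set V) : Set ℕ :=
  {p : ℕ | ∃ f : Fin p → StrongSub D,
    (∀ i, S ⊆ (f i).verts) ∧
    (∀ i j, i ≠ j → (f i).verts ∩ (f j).verts = S) ∧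
    (∀ i j, i ≠ j → ∀ u v, ¬ ((f i).Arc u v ∧ (f j).Arc u v))}

theorem kappaS_eq {V : Type} (D : Dgraph V) (S : Set V) : kappaS D S = sSup (kSet D S) := rfl

theorem zero_mem_kSet {V : Type} (D : Dgraph V) (S : Set V) : 0 ∈ kSet D S :=
  ⟨Fin.elim0, fun i => i.elim0, fun i => i.elim0, fun i => i.elim0⟩

/-- Pigeonhole: if `S` contains two distinct vertices, any family of pairwise
arc-disjoint strong subgraphs containing `S` has size at most `n`. -/
theorem kSet_bdd {n : ℕ} (D : Dgraph (Fin n)) (S : Set (Fin n)) (s t : Fin n)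
    (hs : s ∈ S) (ht : t ∈ S) (hst : s ≠ t) : ∀ p ∈ kSet D S, p ≤ n := by
  rintro p ⟨f, hmem, -, hdisj⟩
  have key : ∀ i : Fin p, ∃ w : Fin n, (f i).Arc s w := by
    intro i
    have h := (f i).strong s (hmem i hs) t (hmem i ht)
    rcases h.cases_head with h | ⟨w, hw, -⟩
    · exact absurd h hst
    · exact ⟨w, hw⟩
  choose g hg using key
  have hinj : Function.Injective g := by
    intro i j hij
    by_contra hne
    exact hdisj i j hne s (g i) ⟨hg i, hij ▸ hg j⟩
  simpa using Fintype.card_le_of_injective g hinj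

theorem kSet_bddAbove {n : ℕ} (D : Dgraph (Fin n)) (S : Set (Fin n)) (s t : Fin n)
    (hs : s ∈ S) (ht : t ∈ S) (hst : s ≠ t) : BddAbove (kSet D S) :=
  ⟨n, fun p hp => kSet_bdd D S s t hs ht hst p hp⟩

/-- If `kappaS D S ≥ 1` and `S` contains two distinct vertices, there is a strong
subgraph containing `S`. -/
theorem exists_strongSub {n : ℕ} (D : Dgraph (Fin n)) (S : Set (Fin n)) (s t : Fin n)
    (hs : s ∈ S) (ht : t ∈ S) (hst : s ≠ t) (h1 : 1 ≤ kappaS D S) :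
    ∃ H : StrongSub D, S ⊆ H.verts := by
  have hmem := Nat.sSup_mem ⟨0, zero_mem_kSet D S⟩ (kSet_bddAbove D S s t hs ht hst)
  rw [kappaS_eq] at h1
  rcases hmem with ⟨f, hf, -, -⟩
  exact ⟨f ⟨0, h1⟩, hf _⟩

end Aux

namespace Aux2
open Dgraph Aux
open scoped Fin.NatCast Fin.CommRing

variable {n : ℕ} [NeZero n]

/-- Reflexive-transitive reach along successor steps in `Fin n`. -/
theorem cycle_reach (R : Fin n → Fin n → Prop) (hR : ∀ u : Fin n, R u (u + 1)) :
    ∀ u v : Fin n, Relation.ReflTransGen R u v := by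
  have key : ∀ j : ℕ, ∀ u : Fin n, Relation.ReflTransGen R u (u + (j : Fin n)) := by
    intro j
    induction j with
    | zero => intro u; simpa using Relation.ReflTransGen.refl
    | succ j ih =>
      intro u
      have e : ((j + 1 : ℕ) : Fin n) = ((j : ℕ) : Fin n) + 1 := by push_cast; ring
      rw [e, ← add_assoc]
      exact (ih u).tail (hR _)
  intro u v
  have := key ((v - u : Fin n) : ℕ) u
  rwa [Fin.cast_val_eq_self, add_sub_cancel] at this

/-- Monotone potential along the cycle minus the arc out of `a`. -/
theorem deleted_mono (a : Fin n) (u v : Fin n) (huv : v = u + 1) (hua : u ≠ a) :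
    ((u - (a + 1) : Fin n) : ℕ) ≤ ((v - (a + 1) : Fin n) : ℕ) := by
  have hx : v - (a + 1) ≠ 0 := by
    intro h
    apply hua
    have : v = a + 1 := by
      have := sub_eq_zero.mp h
      exact this
    rw [huv] at this
    exact add_right_cancel this
  have e : u - (a + 1) = (v - (a + 1)) - 1 := by rw [huv]; ring
  rw [e, sub_one_val n _ hx]
  omega

/-- In the cycle minus one arc there is no nontrivial cycle: any two mutually
reachable vertices are equal. -/
theorem deleted_no_cycle (a : Fin n) (R : Fin n → Fin n → Prop)
    (hR : ∀ u v, R u v → v = u + 1 ∧ u ≠ a) (u v : Fin n)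
    (h1 : Relation.ReflTransGen R u v) (h2 : Relation.ReflTransGen R v u) : u = v := by
  set ρ : Fin n → ℕ := fun x => ((x - (a + 1) : Fin n) : ℕ) with hρ
  have mono : ∀ x y : Fin n, Relation.ReflTransGen R x y → ρ x ≤ ρ y := by
    intro x y h
    induction h with
    | refl => exact le_refl _
    | tail _ hR' ih => exact le_trans ih (deleted_mono a _ _ (hR _ _ hR').1 (hR _ _ hR').2)
  have := le_antisymm (mono u v h1) (mono v u h2)
  have : u - (a + 1) = v - (a + 1) := Fin.ext this
  exact sub_left_inj.mp this

end Aux2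

namespace Aux3
open Dgraph Aux Aux2

variable {n : ℕ} [NeZero n]

theorem cycle_arcCount (D : Dgraph (Fin n)) (hR : ∀ u v, D.Arc u v ↔ v = u + 1) :
    arcCount D = n := by
  have e : {p : Fin n × Fin n // D.Arc p.1 p.2} ≃ Fin n :=
    { toFun := fun p => p.1.1
      invFun := fun u => ⟨(u, u + 1), (hR u (u + 1)).mpr rfl⟩
      left_inv := by
        rintro ⟨⟨u, v⟩, h⟩
        have := (hR u v).mp h
        subst this
        rfl
      right_inv := fun u => rfl }
  rw [arcCount, Nat.card_congr e, Nat.card_eq_fintype_card, Fintype.card_fin]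

set_option linter.unusedSectionVars false in
theorem lower_bound (k : ℕ) (hk2 : 2 ≤ k) (hkn : k ≤ n) (D : Dgraph (Fin n))
    (h : MinSSC D k 1) : n ≤ arcCount D := by
  have hout : ∀ v : Fin n, ∃ w, D.Arc v w := by
    intro v
    obtain ⟨S, hvS, hScard⟩ := Finset.exists_superset_card_eq (s := {v})
      (by simpa using hk2.trans' (by omega)) (by simpa using hkn)
    have hvS : v ∈ S := hvS (by simp)
    obtain ⟨t, htS, htv⟩ := Finset.exists_mem_ne (s := S) (by omega) v
    have hkap : 1 ≤ kappaS D (↑S : Set (Fin n)) := by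
      have hmem : kappaS D ↑S ∈ {m : ℕ | ∃ S' : Finset (Fin n), S'.card = k ∧ kappaS D ↑S' = m} :=
        ⟨S, hScard, rfl⟩
      exact h.1.trans (Nat.sInf_le hmem)
    obtain ⟨H, hH⟩ := exists_strongSub D ↑S v t hvS htS (Ne.symm htv) hkap
    have hreach := H.strong v (hH hvS) t (hH htS)
    rcases hreach.cases_head with heq | ⟨w, hw, -⟩
    · exact absurd heq.symm htv
    · exact ⟨w, H.arc_sub _ _ hw⟩
  choose g hg using hout
  have : Function.Injective (fun v : Fin n => (⟨(v, g v), hg v⟩ : {p : Fin n × Fin n // D.Arc p.1 p.2})) := by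
    intro a b hab
    simpa using congrArg (fun x => x.1.1) hab
  calc n = Nat.card (Fin n) := by simp
    _ ≤ arcCount D := Nat.card_le_card_of_injective _ this

end Aux3

/-- For `2 ≤ k ≤ n`, `f(n, k, 1) = n`: the directed cycle on `n` vertices is
minimally strong subgraph `(k,1)`-connected with `n` arcs, which is optimal. -/
theorem stmt15 (n k : ℕ) (hk2 : 2 ≤ k) (hkn : k ≤ n) :
    let C : Dgraph (Fin n) :=
      ⟨fun u v => ((u : ℕ) + 1 = v ∨ ((u : ℕ) = n - 1 ∧ (v : ℕ) = 0)),
        fun v h => by rcases h with h | ⟨h1, h2⟩ <;> omega⟩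
    C.MinSSC k 1 ∧ C.arcCount = n ∧ Dgraph.fMin n k 1 = n := by
  intro C
  haveI : NeZero n := ⟨by omega⟩
  have hCarc : ∀ u v : Fin n, C.Arc u v ↔ v = u + 1 := fun u v => Aux.cycArc_iff n u v
  -- a strong subgraph of C equal to all of C
  have hstrong : ∀ u v : Fin n, Relation.ReflTransGen C.Arc u v :=
    Aux2.cycle_reach C.Arc (fun u => (hCarc u (u + 1)).mpr rfl)
  let W : Dgraph.StrongSub C :=
    { verts := Set.univ
      Arc := C.Arc
      arc_sub := fun _ _ h => h
      arc_mem := fun _ _ _ => ⟨trivial, trivial⟩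
      strong := fun u _ v _ => hstrong u v }
  -- existence of a k-subset
  obtain ⟨S₀, -, hS₀⟩ := Finset.exists_subset_card_eq (s := (Finset.univ : Finset (Fin n)))
    (n := k) (by simpa using hkn)
  -- Part (a): 1 ≤ kappa C k
  have hkapS : ∀ S : Finset (Fin n), S.card = k → 1 ≤ Dgraph.kappaS C ↑S := by
    intro S hS
    obtain ⟨s, hsS, t, htS, hst⟩ := Finset.one_lt_card.mp (by omega : 1 < S.card)
    have h1 : 1 ∈ Aux.kSet C ↑S := by
      refine ⟨fun _ => W, fun i x _ => trivial, fun i j hij => absurd (Subsingleton.elim i j) hij,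
        fun i j hij => absurd (Subsingleton.elim i j) hij⟩
    exact le_csSup (Aux.kSet_bddAbove C ↑S s t hsS htS hst) h1
  have hkap : 1 ≤ Dgraph.kappa C k := by
    have hne : {m : ℕ | ∃ S : Finset (Fin n), S.card = k ∧ Dgraph.kappaS C ↑S = m}.Nonempty :=
      ⟨_, S₀, hS₀, rfl⟩
    obtain ⟨S, hS, hEq⟩ := Nat.sInf_mem hne
    rw [Dgraph.kappa, ← hEq]
    exact hkapS S hS
  -- Part (b): deleting any arc kills connectivity
  have hdel : ∀ e : Fin n × Fin n, C.Arc e.1 e.2 → Dgraph.kappa (C.deleteArc e) k ≤ 0 := by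
    intro e he
    have hkS0 : Dgraph.kappaS (C.deleteArc e) ↑S₀ = 0 := by
      have hset : Aux.kSet (C.deleteArc e) ↑S₀ = {0} := by
        apply Set.Subset.antisymm
        · rintro p ⟨f, hmem, -, -⟩
          by_contra hp
          have hp' : 0 < p := Nat.pos_of_ne_zero (by simpa using hp)
          set H := f ⟨0, hp'⟩ with hH
          obtain ⟨s, hsS, t, htS, hst⟩ := Finset.one_lt_card.mp (by omega : 1 < S₀.card)
          have hRkey : ∀ u v : Fin n, H.Arc u v → v = u + 1 ∧ u ≠ e.1 := by
            intro u v huv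
            obtain ⟨hC, hne⟩ := H.arc_sub u v huv
            have hv : v = u + 1 := (hCarc u v).mp hC
            refine ⟨hv, fun hu => hne ?_⟩
            have he2 : e.2 = e.1 + 1 := (hCarc e.1 e.2).mp he
            rw [Prod.ext_iff]
            exact ⟨hu, by rw [hv, hu, ← he2]⟩
          have h1 := H.strong s (hmem _ hsS) t (hmem _ htS)
          have h2 := H.strong t (hmem _ htS) s (hmem _ hsS)
          exact hst (Aux2.deleted_no_cycle e.1 H.Arc hRkey s t h1 h2)
        · intro p hp
          simp only [Set.mem_singleton_iff] at hp
          rw [hp]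
          exact Aux.zero_mem_kSet _ _
      rw [Aux.kappaS_eq, hset, csSup_singleton]
    exact Nat.sInf_le ⟨S₀, hS₀, hkS0⟩
  have hMin : C.MinSSC k 1 := ⟨hkap, fun e he => by simpa using hdel e he⟩
  have hCount : C.arcCount = n := Aux3.cycle_arcCount C hCarc
  refine ⟨hMin, hCount, ?_⟩
  have hnmem : n ∈ {m : ℕ | ∃ D : Dgraph (Fin n), D.MinSSC k 1 ∧ D.arcCount = m} :=
    ⟨C, hMin, hCount⟩
  refine le_antisymm (Nat.sInf_le hnmem) (le_csInf ⟨n, hnmem⟩ ?_)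
  rintro m ⟨D, hD, rfl⟩
  exact Aux3.lower_bound k hk2 hkn D hD
end

section
/- For n ∉ {4,6} and 2 ≤ ℓ ≤ n−1, f(n,n,ℓ) = nℓ: the union of ℓ arc-disjoint Hamiltonian cycles from a Hamiltonian decomposition of ↔K_n is a minimally strong subgraph (n,ℓ)-connected digraph with nℓ arcs. -/
/-- A Hamiltonian cycle digraph: strong, and every vertex has out-degree 1. -/
def Dgraph.IsHamCycle {V : Type} (H : Dgraph V) : Prop :=
  H.IsStrong ∧ ∀ v : V, Nat.card {w : V // H.Arc v w} = 1

namespace Dgraph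

/-- The membership set defining `kappaS`. -/
def KSet {V : Type} (D : Dgraph V) (S : Set V) : Set ℕ :=
  {p : ℕ | ∃ f : Fin p → StrongSub D,
    (∀ i, S ⊆ (f i).verts) ∧
    (∀ i j, i ≠ j → (f i).verts ∩ (f j).verts = S) ∧
    (∀ i j, i ≠ j → ∀ u v, ¬ ((f i).Arc u v ∧ (f j).Arc u v))}

lemma kappaS_eq_sSup_KSet {V : Type} (D : Dgraph V) (S : Set V) :
    D.kappaS S = sSup (D.KSet S) := rfl

lemma zero_mem_KSet {V : Type} (D : Dgraph V) (S : Set V) : 0 ∈ D.KSet S :=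
  ⟨Fin.elim0, fun i => i.elim0, fun i => i.elim0, fun i => i.elim0⟩

lemma exists_out_arc {n : ℕ} {D : Dgraph (Fin n)} (hn : 2 ≤ n) (F : D.StrongSub)
    (hF : F.verts = Set.univ) (v : Fin n) : ∃ w, F.Arc v w := by
  have : Nontrivial (Fin n) := by
    rcases n with _ | _ | n
    · omega
    · omega
    · infer_instance
  obtain ⟨u, hu⟩ := exists_ne v
  have h := F.strong v (hF ▸ Set.mem_univ v) u (hF ▸ Set.mem_univ u)
  rcases Relation.ReflTransGen.cases_head h with h | ⟨w, hw, _⟩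
  · exact absurd h.symm hu
  · exact ⟨w, hw⟩

lemma card_bound {n : ℕ} {D : Dgraph (Fin n)} (hn : 2 ≤ n) {p : ℕ}
    (f : Fin p → StrongSub D)
    (hv : ∀ i, (f i).verts = Set.univ)
    (hd : ∀ i j, i ≠ j → ∀ u v, ¬ ((f i).Arc u v ∧ (f j).Arc u v)) :
    p * n ≤ D.arcCount := by
  choose g hg using fun (i : Fin p) (v : Fin n) => exists_out_arc hn (f i) (hv i) v
  have hinj : Function.Injective (fun x : Fin p × Fin n =>
      (⟨(x.2, g x.1 x.2), (f x.1).arc_sub _ _ (hg x.1 x.2)⟩ :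
        {q : Fin n × Fin n // D.Arc q.1 q.2})) := by
    rintro ⟨i, v⟩ ⟨j, w⟩ h
    simp only [Subtype.mk_eq_mk, Prod.mk.injEq] at h
    obtain ⟨hvw, hgw⟩ := h
    subst hvw
    by_cases hij : i = j
    · subst hij; rfl
    · exact absurd ⟨hg i v, by rw [hgw]; exact hg j v⟩ (hd i j hij v _)
  calc p * n = Nat.card (Fin p × Fin n) := by
        simp [Nat.card_eq_fintype_card]
    _ ≤ _ := Nat.card_le_card_of_injective _ hinj

/-- Every element of the `KSet` of the full vertex set satisfies `p * n ≤ arcCount`. -/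
lemma KSet_mul_le {n : ℕ} {D : Dgraph (Fin n)} (hn : 2 ≤ n) {p : ℕ}
    (hp : p ∈ D.KSet Set.univ) : p * n ≤ D.arcCount := by
  obtain ⟨f, hsub, _, hdis⟩ := hp
  exact card_bound hn f (fun i => Set.univ_subset_iff.mp (hsub i)) hdis

lemma kappa_eq_kappaS_univ {n : ℕ} (D : Dgraph (Fin n)) :
    D.kappa n = D.kappaS Set.univ := by
  have hset : {m : ℕ | ∃ S : Finset (Fin n), S.card = n ∧ kappaS D ↑S = m} =
      {D.kappaS Set.univ} := by
    ext m
    constructor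
    · rintro ⟨S, hS, rfl⟩
      have : S = Finset.univ := Finset.eq_univ_of_card S (by simp [hS])
      simp [this]
    · rintro rfl
      exact ⟨Finset.univ, by simp, by simp⟩
  rw [kappa, hset, csInf_singleton]

lemma arcCount_deleteArc_lt {n : ℕ} (D : Dgraph (Fin n)) (e : Fin n × Fin n)
    (he : D.Arc e.1 e.2) : (D.deleteArc e).arcCount < D.arcCount := by
  have hinj : Function.Injective
      (fun x : {q : Fin n × Fin n // (D.deleteArc e).Arc q.1 q.2} ⊕ Unit =>
        (Sum.elim (fun a => ⟨a.1, a.2.1⟩) (fun _ => ⟨e, he⟩) x :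
          {q : Fin n × Fin n // D.Arc q.1 q.2})) := by
    rintro (a | a) (b | b) h
    · simp only [Sum.elim_inl, Subtype.mk_eq_mk] at h
      exact congrArg Sum.inl (Subtype.ext h)
    · simp only [Sum.elim_inl, Sum.elim_inr, Subtype.mk_eq_mk] at h
      exact absurd h (by simpa using a.2.2)
    · simp only [Sum.elim_inl, Sum.elim_inr, Subtype.mk_eq_mk] at h
      exact absurd h.symm (by simpa using b.2.2)
    · cases a; cases b; rfl
  have := Nat.card_le_card_of_injective _ hinj
  rw [Nat.card_sum] at this
  simp only [Nat.card_unique] at this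
  dsimp [arcCount]
  omega

end Dgraph

/-- For `n ∉ {4, 6}` and `2 ≤ ℓ ≤ n - 1`, `f(n, n, ℓ) = nℓ`: the union of `ℓ`
cycles from a Hamiltonian decomposition of `↔K_n` is minimally strong subgraph
`(n,ℓ)`-connected with `nℓ` arcs. -/
theorem stmt16 (n ℓ : ℕ) (hn4 : n ≠ 4) (hn6 : n ≠ 6)
    (hl2 : 2 ≤ ℓ) (hln : ℓ ≤ n - 1)
    (H : Fin (n - 1) → Dgraph (Fin n))
    (hHam : ∀ i, (H i).IsHamCycle)
    (hdisj : ∀ i j, i ≠ j → ∀ u v, ¬ ((H i).Arc u v ∧ (H j).Arc u v))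
    (hcover : ∀ u v : Fin n, u ≠ v ↔ ∃ i, (H i).Arc u v) :
    let Dl : Dgraph (Fin n) :=
      ⟨fun u v => ∃ i : Fin (n - 1), (i : ℕ) < ℓ ∧ (H i).Arc u v,
        fun v h => (H h.choose).loopless v h.choose_spec.2⟩
    Dl.MinSSC n ℓ ∧ Dl.arcCount = n * ℓ ∧ Dgraph.fMin n n ℓ = n * ℓ := by
  intro Dl
  have hn3 : 3 ≤ n := by omega
  have hn2 : 2 ≤ n := by omega
  -- out-neighbour data for the Hamiltonian cycles
  have huniq : ∀ (i : Fin (n - 1)) (u : Fin n), ∀ w w' : Fin n,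
      (H i).Arc u w → (H i).Arc u w' → w = w' := by
    intro i u w w' hw hw'
    have h1 := (hHam i).2 u
    rw [Nat.card_eq_one_iff_unique] at h1
    have := h1.1
    have : (⟨w, hw⟩ : {x : Fin n // (H i).Arc u x}) = ⟨w', hw'⟩ :=
      Subsingleton.elim _ _
    exact congrArg Subtype.val this
  have hexout : ∀ (i : Fin (n - 1)) (v : Fin n), ∃ w, (H i).Arc v w := by
    intro i v
    have h1 := (hHam i).2 v
    rw [Nat.card_eq_one_iff_unique] at h1
    obtain ⟨⟨w, hw⟩⟩ := h1.2
    exact ⟨w, hw⟩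
  -- arc count of Dl
  have harc : ∀ u v : Fin n, Dl.Arc u v ↔ ∃ i : Fin (n - 1), (i : ℕ) < ℓ ∧ (H i).Arc u v :=
    fun u v => Iff.rfl
  have hcount : Dl.arcCount = n * ℓ := by
    apply le_antisymm
    · -- injection from arcs into Fin ℓ × Fin n
      have hinj : Function.Injective
          (fun a : {q : Fin n × Fin n // Dl.Arc q.1 q.2} =>
            ((⟨(a.2.choose : Fin (n-1)).1, a.2.choose_spec.1⟩ : Fin ℓ), a.1.1)) := by
        rintro ⟨⟨u, v⟩, ha⟩ ⟨⟨u', v'⟩, hb⟩ h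
        simp only [Prod.mk.injEq, Fin.mk.injEq] at h
        obtain ⟨hi, hu⟩ := h
        subst hu
        have hieq : ha.choose = hb.choose := Fin.ext hi
        have h1 := ha.choose_spec.2
        have h2 := hb.choose_spec.2
        rw [hieq] at h1
        have := huniq hb.choose u v v' h1 h2
        subst this
        rfl
      have := Nat.card_le_card_of_injective _ hinj
      simpa [Nat.card_eq_fintype_card, Nat.mul_comm, Dgraph.arcCount] using this
    · -- injection from Fin ℓ × Fin n into arcs
      choose g hg using fun (i : Fin ℓ) (v : Fin n) =>
        hexout ⟨i.1, lt_of_lt_of_le i.2 hln⟩ v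
      have hinj : Function.Injective
          (fun x : Fin ℓ × Fin n =>
            (⟨(x.2, g x.1 x.2), ⟨⟨x.1.1, lt_of_lt_of_le x.1.2 hln⟩, x.1.2, hg x.1 x.2⟩⟩ :
              {q : Fin n × Fin n // Dl.Arc q.1 q.2})) := by
        rintro ⟨i, v⟩ ⟨j, w⟩ h
        simp only [Subtype.mk_eq_mk, Prod.mk.injEq] at h
        obtain ⟨hvw, hgw⟩ := h
        subst hvw
        by_cases hij : i = j
        · subst hij; rfl
        · have hne : (⟨i.1, lt_of_lt_of_le i.2 hln⟩ : Fin (n-1)) ≠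
              ⟨j.1, lt_of_lt_of_le j.2 hln⟩ := by
            intro hc
            exact hij (Fin.ext (by simpa [Fin.mk.injEq] using congrArg Fin.val hc))
          exact absurd ⟨hg i v, by rw [hgw]; exact hg j v⟩ (hdisj _ _ hne v _)
      have := Nat.card_le_card_of_injective _ hinj
      simpa [Nat.card_eq_fintype_card, Nat.mul_comm, Dgraph.arcCount] using this
  -- kappaS of Dl at univ equals ℓ
  have hmemℓ : ℓ ∈ Dl.KSet Set.univ := by
    refine ⟨fun i => ⟨Set.univ, (H ⟨i.1, lt_of_lt_of_le i.2 hln⟩).Arc,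
      fun u v h => ⟨⟨i.1, lt_of_lt_of_le i.2 hln⟩, i.2, h⟩,
      fun u v _ => ⟨Set.mem_univ u, Set.mem_univ v⟩,
      fun u _ v _ => (hHam _).1 u v⟩, fun i => Set.subset_univ _,
      fun i j _ => by simp, ?_⟩
    intro i j hij u v
    refine hdisj ⟨i.1, lt_of_lt_of_le i.2 hln⟩ ⟨j.1, lt_of_lt_of_le j.2 hln⟩ ?_ u v
    intro hc
    exact hij (Fin.ext (by simpa [Fin.mk.injEq] using congrArg Fin.val hc))
  have hbdd : ∀ p ∈ Dl.KSet Set.univ, p ≤ ℓ := by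
    intro p hp
    have := Dgraph.KSet_mul_le hn2 hp
    rw [hcount] at this
    nlinarith
  have hkS : Dl.kappaS Set.univ = ℓ := by
    rw [Dgraph.kappaS_eq_sSup_KSet]
    exact le_antisymm (csSup_le ⟨0, Dl.zero_mem_KSet _⟩ hbdd)
      (le_csSup ⟨ℓ, hbdd⟩ hmemℓ)
  have hkappa : Dl.kappa n = ℓ := by rw [Dgraph.kappa_eq_kappaS_univ, hkS]
  -- MinSSC
  have hMin : Dl.MinSSC n ℓ := by
    constructor
    · rw [hkappa]
    · intro e he
      rw [Dgraph.kappa_eq_kappaS_univ, Dgraph.kappaS_eq_sSup_KSet]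
      apply csSup_le ⟨0, Dgraph.zero_mem_KSet _ _⟩
      intro p hp
      have h1 := Dgraph.KSet_mul_le hn2 hp
      have h2 := Dgraph.arcCount_deleteArc_lt Dl e he
      rw [hcount] at h2
      by_contra hc
      push_neg at hc
      have : ℓ ≤ p := by omega
      nlinarith
  refine ⟨hMin, hcount, ?_⟩
  -- fMin
  apply le_antisymm
  · exact Nat.sInf_le ⟨Dl, hMin, hcount⟩
  · refine le_csInf ⟨n * ℓ, Dl, hMin, hcount⟩ ?_
    rintro m ⟨D, hD, rfl⟩
    have hne : (D.KSet Set.univ).Nonempty := ⟨0, D.zero_mem_KSet _⟩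
    have hb : BddAbove (D.KSet Set.univ) := by
      refine ⟨D.arcCount, fun p hp => ?_⟩
      have := Dgraph.KSet_mul_le hn2 hp
      nlinarith
    have hmem := Nat.sSup_mem hne hb
    have h1 : ℓ ≤ sSup (D.KSet Set.univ) := by
      have := hD.1
      rwa [Dgraph.kappa_eq_kappaS_univ, Dgraph.kappaS_eq_sSup_KSet] at this
    have h2 := Dgraph.KSet_mul_le hn2 hmem
    nlinarith
end

section
/- Every strong digraph D on n vertices has a strong spanning subdigraph H with at most 2n−2 arcs; moreover, if H has exactly 2n−2 arcs then H is a symmetric digraph whose underlying undirected graph is a tree. -/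
open Relation
namespace StmtAux
section lists

variable {α : Type}

lemma rtg_sim {R S : α → α → Prop} (h : ∀ x y, R x y → Relation.ReflTransGen S x y) :
    ∀ {a b}, Relation.ReflTransGen R a b → Relation.ReflTransGen S a b := by
  intro a b hab
  induction hab with
  | refl => exact .refl
  | tail _ hbc ih => exact ih.trans (h _ _ hbc)

lemma getLast_of_suffix {a c : α} {s m : List α} (p : List α) (hps : c :: m = p ++ a :: s) :
    (a :: s).getLast (List.cons_ne_nil _ _) = (c :: m).getLast (List.cons_ne_nil _ _) := by
  have h1 : (c :: m).getLast? = (a :: s).getLast? := by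
    rw [hps, List.getLast?_append_of_ne_nil _ (List.cons_ne_nil _ _)]
  rw [List.getLast?_eq_getLast_of_ne_nil (List.cons_ne_nil _ _),
      List.getLast?_eq_getLast_of_ne_nil (List.cons_ne_nil _ _)] at h1
  exact (Option.some.inj h1).symm

lemma exists_nodup_chain (R : α → α → Prop) :
    ∀ (n : ℕ) (l : List α) (a : α), l.length ≤ n → List.Chain R a l →
    ∃ m : List α, List.Chain R a m ∧
      (a :: m).getLast (List.cons_ne_nil _ _) = (a :: l).getLast (List.cons_ne_nil _ _) ∧
      (a :: m).Nodup ∧ ∀ x ∈ m, x ∈ l := by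
  intro n
  induction n with
  | zero =>
    intro l a hl _
    have : l = [] := List.length_eq_zero_iff.mp (Nat.le_zero.mp hl)
    subst this
    exact ⟨[], List.Chain.nil, rfl, by simp, by simp⟩
  | succ n ih =>
    intro l a hl hchain
    match l, hl, hchain with
    | [], _, _ => exact ⟨[], List.Chain.nil, rfl, by simp, by simp⟩
    | c :: t, hl, hchain' =>
      obtain ⟨hac, hct⟩ := List.chain_cons.mp hchain'
      obtain ⟨m', hm'c, hm'l, hm'nd, hm'sub⟩ := ih t c (by simpa using hl) hct
      by_cases ha : a ∈ c :: m'
      · -- cut to the suffix after `a`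
        obtain ⟨p, s, hps⟩ := List.append_of_mem ha
        have hsub : (a :: s).Sublist (c :: m') := by
          rw [hps]; exact (List.suffix_append p (a :: s)).sublist
        have hchain_s : List.Chain R a s := by
          cases p with
          | nil =>
            simp only [List.nil_append] at hps
            injection hps with h1 h2
            subst h1; subst h2
            exact hm'c
          | cons q p' =>
            injection hps with h1 h2
            rw [h2] at hm'c
            exact (List.isChain_cons_split.mp hm'c).2
        refine ⟨s, hchain_s, ?_, ?_, ?_⟩
        · rw [getLast_of_suffix p hps, hm'l, List.getLast_cons_cons]
        · exact hm'nd.sublist hsub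
        · intro x hx
          have hx2 : x ∈ c :: m' := hsub.subset (List.mem_cons_of_mem _ hx)
          rcases List.mem_cons.mp hx2 with h | h
          · exact h ▸ List.mem_cons_self
          · exact List.mem_cons_of_mem _ (hm'sub x h)
      · refine ⟨c :: m', List.Chain.cons hac hm'c, ?_, ?_, ?_⟩
        · rw [List.getLast_cons_cons, List.getLast_cons_cons, hm'l]
        · exact List.nodup_cons.mpr ⟨ha, hm'nd⟩
        · intro x hx
          rcases List.mem_cons.mp hx with h | h
          · exact h ▸ List.mem_cons_self
          · exact List.mem_cons_of_mem _ (hm'sub x h)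


variable [DecidableEq α]

def chainArcs : α → List α → Finset (α × α)
  | _, [] => ∅
  | a, b :: l => insert (a, b) (chainArcs b l)

lemma chainArcs_rel {R : α → α → Prop} :
    ∀ (l : List α) (a : α), List.Chain R a l → ∀ p ∈ chainArcs a l, R p.1 p.2 := by
  intro l
  induction l with
  | nil => intro a _ p hp; simp [chainArcs] at hp
  | cons b l ih =>
    intro a hc p hp
    rcases List.chain_cons.mp hc with ⟨hab, hbl⟩
    rcases Finset.mem_insert.mp hp with h | h
    · subst h; exact hab
    · exact ih b hbl p h

lemma chainArcs_mem_ends :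
    ∀ (l : List α) (a : α), ∀ p ∈ chainArcs a l, p.1 ∈ a :: l ∧ p.2 ∈ l := by
  intro l
  induction l with
  | nil => intro a p hp; simp [chainArcs] at hp
  | cons b l ih =>
    intro a p hp
    rcases Finset.mem_insert.mp hp with h | h
    · subst h; simp
    · obtain ⟨h1, h2⟩ := ih b p h
      exact ⟨List.mem_cons_of_mem _ h1, List.mem_cons_of_mem _ h2⟩

lemma chainArcs_card :
    ∀ (l : List α) (a : α), (a :: l).Nodup → (chainArcs a l).card = l.length := by
  intro l
  induction l with
  | nil => intro a _; simp [chainArcs]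
  | cons b l ih =>
    intro a hnd
    have hnotmem : (a, b) ∉ chainArcs b l := by
      intro h
      have := (chainArcs_mem_ends l b (a, b) h).1
      exact (List.nodup_cons.mp hnd).1 this
    rw [chainArcs, Finset.card_insert_of_notMem hnotmem,
      ih b (List.nodup_cons.mp hnd).2]
    simp

lemma chainArcs_reach_head :
    ∀ (l : List α) (a : α), ∀ x ∈ a :: l,
      Relation.ReflTransGen (fun p q => (p, q) ∈ chainArcs a l) a x := by
  intro l
  induction l with
  | nil => intro a x hx; simp at hx; subst hx; exact .refl
  | cons b l ih =>
    intro a x hx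
    rcases List.mem_cons.mp hx with h | h
    · subst h; exact .refl
    · have hbx := ih b x h
      have hmono : Relation.ReflTransGen (fun p q => (p, q) ∈ chainArcs a (b :: l)) b x :=
        rtg_sim (fun p q hpq => Relation.ReflTransGen.single
          (Finset.mem_insert_of_mem hpq)) hbx
      exact Relation.ReflTransGen.head (Finset.mem_insert_self _ _) hmono

lemma chainArcs_reach_last :
    ∀ (l : List α) (a : α), ∀ x ∈ a :: l,
      Relation.ReflTransGen (fun p q => (p, q) ∈ chainArcs a l) x
        ((a :: l).getLast (List.cons_ne_nil _ _)) := by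
  intro l
  induction l with
  | nil => intro a x hx; simp at hx; subst hx; exact .refl
  | cons b l ih =>
    intro a x hx
    rw [List.getLast_cons_cons]
    have key : ∀ y ∈ b :: l,
        Relation.ReflTransGen (fun p q => (p, q) ∈ chainArcs a (b :: l)) y
          ((b :: l).getLast (List.cons_ne_nil _ _)) := fun y hy =>
      rtg_sim (fun p q hpq => Relation.ReflTransGen.single
        (Finset.mem_insert_of_mem hpq)) (ih b y hy)
    rcases List.mem_cons.mp hx with h | h
    · subst h
      exact Relation.ReflTransGen.head (Finset.mem_insert_self _ _)
        (key b List.mem_cons_self)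
    · exact key x h

lemma chainArcs_fst_ne_last :
    ∀ (l : List α) (a : α), (a :: l).Nodup → ∀ p ∈ chainArcs a l,
      p.1 ≠ (a :: l).getLast (List.cons_ne_nil _ _) := by
  intro l
  induction l with
  | nil => intro a _ p hp; simp [chainArcs] at hp
  | cons b l ih =>
    intro a hnd p hp
    rw [List.getLast_cons_cons]
    rcases Finset.mem_insert.mp hp with h | h
    · subst h
      intro hcon
      simp only at hcon
      exact (List.nodup_cons.mp hnd).1 (hcon ▸ List.getLast_mem (List.cons_ne_nil _ _))
    · exact ih b (List.nodup_cons.mp hnd).2 p h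

lemma chainArcs_last_arc :
    ∀ (l : List α) (a : α), l ≠ [] → ∃ q ∈ chainArcs a l,
      q.2 = (a :: l).getLast (List.cons_ne_nil _ _) := by
  intro l
  induction l with
  | nil => intro a h; exact absurd rfl h
  | cons b l ih =>
    intro a _
    rw [List.getLast_cons_cons]
    cases l with
    | nil => exact ⟨(a, b), Finset.mem_insert_self _ _, rfl⟩
    | cons c t =>
      obtain ⟨q, hq, hq2⟩ := ih b (List.cons_ne_nil _ _)
      exact ⟨q, Finset.mem_insert_of_mem hq, hq2⟩

end lists
section digraphs
variable {V : Type} [DecidableEq V]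



/-- First exit arc out of `U`. -/
lemma first_exit {A : V → V → Prop} {U : Finset V} {a w : V}
    (h : Relation.ReflTransGen A a w) (ha : a ∈ U) (hw : w ∉ U) :
    ∃ u ∈ U, ∃ y, y ∉ U ∧ A u y := by
  induction h using Relation.ReflTransGen.head_induction_on with
  | refl => exact absurd ha hw
  | head hab _ ih =>
    rename_i x c _
    by_cases hc : c ∈ U
    · exact ih hc
    · exact ⟨x, ha, c, hc, hab⟩

/-- First entry into `U`, with the prefix staying outside `U`. -/
lemma first_entry {A : V → V → Prop} {U : Finset V} {y t : V}
    (h : Relation.ReflTransGen A y t) (ht : t ∈ U) (hy : y ∉ U) :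
    ∃ z, Relation.ReflTransGen (fun p q => A p q ∧ p ∉ U ∧ q ∉ U) y z ∧
      z ∉ U ∧ ∃ v ∈ U, A z v := by
  induction h using Relation.ReflTransGen.head_induction_on with
  | refl => exact absurd ht hy
  | head hab h ih =>
    rename_i x c
    by_cases hc : c ∈ U
    · exact ⟨x, .refl, hy, c, hc, hab⟩
    · obtain ⟨z, hz1, hz2, v, hv, hzv⟩ := ih hc
      exact ⟨z, Relation.ReflTransGen.head ⟨hab, hy, hc⟩ hz1, hz2, v, hv, hzv⟩




lemma acyclic_of_no_adj {G : SimpleGraph V} (h : ∀ a b, ¬ G.Adj a b) : G.IsAcyclic := by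
  intro v c hc
  cases c with
  | nil => exact hc.ne_nil rfl
  | cons ha _ => exact h _ _ ha

/-- Adding a pendant edge `u - y` (where `y` was isolated) preserves acyclicity. -/
lemma acyclic_insert_pendant {G' G : SimpleGraph V} {y u : V} (hyu : y ≠ u)
    (hG : G.IsAcyclic) (hy : ∀ b, ¬ G.Adj y b)
    (hsub : ∀ a b, G'.Adj a b → G.Adj a b ∨ (a = u ∧ b = y) ∨ (a = y ∧ b = u)) :
    G'.IsAcyclic := by
  intro v c hc
  by_cases hyv : y ∈ c.support
  · -- rotate the cycle to start at y
    have hc' := hc.rotate hyv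
    set c' := c.rotate y hyv with hc'def
    clear_value c'
    match c' with
    | .nil => exact hc'.ne_nil rfl
    | .cons (v := b) hadj q =>
      -- the first step must go to u
      have hbu : b = u := by
        rcases hsub _ _ hadj with h | ⟨h1, _⟩ | ⟨_, h2⟩
        · exact absurd h (hy b)
        · exact absurd h1 hyu
        · exact h2
      subst hbu
      -- now `u` has been renamed to `b`
      -- q is a walk from u to y; find the dart entering y
      obtain ⟨d, hd, hdS, hdnS⟩ := q.exists_boundary_dart {x | x ≠ y} hyu.symm (by simp)
      have hdsnd : d.snd = y := by simpa using hdnS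
      have hdfst : d.fst = b := by
        have hadj2 : G'.Adj d.fst d.snd := d.adj
        rw [hdsnd] at hadj2
        rcases hsub _ _ hadj2 with h | ⟨h1, _⟩ | ⟨h1, _⟩
        · exact absurd h.symm (hy _)
        · exact h1
        · exact absurd h1 hdS
      have hedge : d.edge ∈ q.edges := List.mem_map_of_mem hd
      have hedge2 : s(b, y) ∈ q.edges := by
        have : d.edge = s(d.fst, d.snd) := rfl
        rw [this, hdfst, hdsnd] at hedge
        exact hedge
      have htrail := hc'.isTrail
      have hnd := htrail.edges_nodup
      rw [SimpleGraph.Walk.edges_cons] at hnd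
      have : s(y, b) ∈ q.edges := by rwa [Sym2.eq_swap]
      exact (List.nodup_cons.mp hnd).1 this
  · -- transfer the cycle to G
    have hsubset : ∀ e ∈ c.edges, e ∈ G.edgeSet := by
      intro e he
      induction e using Sym2.ind with
      | _ a b =>
        have hadj : G'.Adj a b := c.adj_of_mem_edges he
        have haS : a ∈ c.support := c.fst_mem_support_of_mem_edges he
        have hbS : b ∈ c.support := c.snd_mem_support_of_mem_edges he
        rcases hsub _ _ hadj with h | ⟨_, h2⟩ | ⟨h1, _⟩
        · exact h
        · exact absurd (h2 ▸ hbS) hyv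
        · exact absurd (h1 ▸ haS) hyv
    exact hG _ (hc.transfer hsubset)


end digraphs
section build
variable {V : Type} [DecidableEq V]

def mkGraph (K : Finset (V × V)) : SimpleGraph V where
  Adj a b := a ≠ b ∧ ((a, b) ∈ K ∨ (b, a) ∈ K)
  symm := ⟨by intro a b h; exact ⟨h.1.symm, h.2.symm⟩⟩
  loopless := ⟨fun a h => h.1 rfl⟩

def Inv (A : V → V → Prop) (U : Finset V) (K : Finset (V × V)) : Prop :=
  (∀ p ∈ K, A p.1 p.2) ∧ (∀ p ∈ K, p.1 ∈ U ∧ p.2 ∈ U) ∧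
  (∀ u ∈ U, ∀ v ∈ U, Relation.ReflTransGen (fun a b => (a, b) ∈ K) u v) ∧
  (((∀ p ∈ K, (p.2, p.1) ∈ K) ∧ K.card = 2 * U.card - 2 ∧ (mkGraph K).IsAcyclic) ∨
    (2 ≤ U.card ∧ K.card ≤ 2 * U.card - 3))

lemma add_ear {A : V → V → Prop} {U : Finset V} {K : Finset (V × V)}
    (hKA : ∀ p ∈ K, A p.1 p.2) (hKU : ∀ p ∈ K, p.1 ∈ U ∧ p.2 ∈ U)
    (hKstrong : ∀ a ∈ U, ∀ b ∈ U, Relation.ReflTransGen (fun s t => (s, t) ∈ K) a b)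
    {u y v : V} {m : List V} (hu : u ∈ U) (hv : v ∈ U)
    (hchain : List.Chain A u (y :: m)) (hnodup : (u :: y :: m).Nodup)
    (hout : ∀ x ∈ y :: m, x ∉ U)
    (hzv : A ((y :: m).getLast (List.cons_ne_nil _ _)) v) :
    ∃ (U' : Finset V) (K' : Finset (V × V)), U ⊆ U' ∧
      (∀ p ∈ K', A p.1 p.2) ∧ (∀ p ∈ K', p.1 ∈ U' ∧ p.2 ∈ U') ∧
      (∀ a ∈ U', ∀ b ∈ U', Relation.ReflTransGen (fun s t => (s, t) ∈ K') a b) ∧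
      U'.card = U.card + (y :: m).length ∧ K'.card = K.card + (y :: m).length + 1 := by
  set ys := y :: m with hys
  set z := ys.getLast (List.cons_ne_nil _ _) with hz
  set E := chainArcs u ys with hE
  set NA := insert (z, v) E with hNA
  have hzys : z ∈ ys := List.getLast_mem _
  have hEmem := chainArcs_mem_ends ys u
  have hchain' : List.Chain A u ys := hchain
  have hErel := chainArcs_rel ys u hchain'
  have hndys : ys.Nodup := hnodup.of_cons
  have hmemNA : ∀ p ∈ NA, (p.1 ∈ u :: ys ∨ p.1 = z) ∧ (p.2 ∈ ys ∨ p.2 = v) := by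
    intro p hp
    rcases Finset.mem_insert.mp hp with h | h
    · subst h; exact ⟨Or.inr rfl, Or.inr rfl⟩
    · exact ⟨Or.inl (hEmem p h).1, Or.inl (hEmem p h).2⟩
  refine ⟨U ∪ ys.toFinset, K ∪ NA, Finset.subset_union_left, ?_, ?_, ?_, ?_, ?_⟩
  · intro p hp
    rcases Finset.mem_union.mp hp with h | h
    · exact hKA p h
    · rcases Finset.mem_insert.mp h with h | h
      · subst h; exact hzv
      · exact hErel p h
  · intro p hp
    rcases Finset.mem_union.mp hp with h | h
    · exact ⟨Finset.mem_union_left _ (hKU p h).1, Finset.mem_union_left _ (hKU p h).2⟩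
    · obtain ⟨h1, h2⟩ := hmemNA p h
      constructor
      · rcases h1 with h1 | h1
        · rcases List.mem_cons.mp h1 with h1 | h1
          · exact h1 ▸ Finset.mem_union_left _ hu
          · exact Finset.mem_union_right _ (List.mem_toFinset.mpr h1)
        · exact h1 ▸ Finset.mem_union_right _ (List.mem_toFinset.mpr hzys)
      · rcases h2 with h2 | h2
        · exact Finset.mem_union_right _ (List.mem_toFinset.mpr h2)
        · exact h2 ▸ Finset.mem_union_left _ hv
  · -- strong connectivity
    have hmonoE : ∀ (a b : V), Relation.ReflTransGen (fun s t => (s, t) ∈ E) a b →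
        Relation.ReflTransGen (fun s t => (s, t) ∈ K ∪ NA) a b :=
      fun a b h => rtg_sim (fun s t hst => Relation.ReflTransGen.single
        (Finset.mem_union_right _ (Finset.mem_insert_of_mem hst))) h
    have hmonoK : ∀ (a b : V), Relation.ReflTransGen (fun s t => (s, t) ∈ K) a b →
        Relation.ReflTransGen (fun s t => (s, t) ∈ K ∪ NA) a b :=
      fun a b h => rtg_sim (fun s t hst => Relation.ReflTransGen.single
        (Finset.mem_union_left _ hst)) h
    have hlastuys : (u :: ys).getLast (List.cons_ne_nil _ _) = z := by
      rw [hys, List.getLast_cons_cons, hz]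
    have hreach1 : ∀ x ∈ u :: ys, Relation.ReflTransGen (fun s t => (s, t) ∈ K ∪ NA) u x :=
      fun x hx => hmonoE u x (chainArcs_reach_head ys u x hx)
    have hreach2 : ∀ x ∈ u :: ys, Relation.ReflTransGen (fun s t => (s, t) ∈ K ∪ NA) x v := by
      intro x hx
      have h1 := hmonoE x _ (chainArcs_reach_last ys u x hx)
      rw [hlastuys] at h1
      exact h1.tail (Finset.mem_union_right _ (Finset.mem_insert_self _ _))
    intro a ha b hb
    rcases Finset.mem_union.mp ha with ha' | ha'
    · rcases Finset.mem_union.mp hb with hb' | hb'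
      · exact hmonoK a b (hKstrong a ha' b hb')
      · exact (hmonoK a u (hKstrong a ha' u hu)).trans
          (hreach1 b (List.mem_cons_of_mem _ (List.mem_toFinset.mp hb')))
    · have haa := hreach2 a (List.mem_cons_of_mem _ (List.mem_toFinset.mp ha'))
      rcases Finset.mem_union.mp hb with hb' | hb'
      · exact haa.trans (hmonoK v b (hKstrong v hv b hb'))
      · exact haa.trans ((hmonoK v u (hKstrong v hv u hu)).trans
          (hreach1 b (List.mem_cons_of_mem _ (List.mem_toFinset.mp hb'))))
  · -- card of U'
    have hdisj : Disjoint U ys.toFinset := by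
      rw [Finset.disjoint_left]
      intro x hx hx2
      exact hout x (List.mem_toFinset.mp hx2) hx
    rw [Finset.card_union_of_disjoint hdisj, List.toFinset_card_of_nodup hndys]
  · -- card of K'
    have hzvE : (z, v) ∉ E := by
      intro h
      exact hout v (hEmem _ h).2 hv
    have hdisj : Disjoint K NA := by
      rw [Finset.disjoint_left]
      intro p hp hp2
      rcases Finset.mem_insert.mp hp2 with h | h
      · have := (hKU p hp).1
        rw [h] at this
        exact hout z hzys this
      · exact hout p.2 (hEmem p h).2 (hKU p hp).2
    rw [Finset.card_union_of_disjoint hdisj, hNA, Finset.card_insert_of_notMem hzvE,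
      chainArcs_card ys u hnodup]
    omega


lemma step [Fintype V] {A : V → V → Prop} (hA : ∀ u v, Relation.ReflTransGen A u v)
    {U : Finset V} {K : Finset (V × V)} (hne : U.Nonempty) (hU : U ≠ Finset.univ)
    (hInv : Inv A U K) :
    ∃ (U' : Finset V) (K' : Finset (V × V)), U ⊆ U' ∧ U.card < U'.card ∧ Inv A U' K' := by
  obtain ⟨hKA, hKU, hKstrong, hdich⟩ := hInv
  obtain ⟨u₀, hu₀⟩ := hne
  have hU1 : 1 ≤ U.card := Finset.card_pos.mpr ⟨u₀, hu₀⟩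
  have hwex : ∃ w, w ∉ U := by
    by_contra h
    push_neg at h
    exact hU (Finset.eq_univ_iff_forall.mpr h)
  obtain ⟨w, hw⟩ := hwex
  by_cases hsympair : ∃ a ∈ U, ∃ b, b ∉ U ∧ A a b ∧ A b a
  · -- add a symmetric pendant
    obtain ⟨a, ha, b, hb, hab, hba⟩ := hsympair
    have haneb : a ≠ b := fun h => hb (h ▸ ha)
    set K' := insert (a, b) (insert (b, a) K) with hK'
    have hab' : (a, b) ∈ K' := Finset.mem_insert_self _ _
    have hba' : (b, a) ∈ K' := Finset.mem_insert_of_mem (Finset.mem_insert_self _ _)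
    have hbaK : (b, a) ∉ K := fun h => hb ((hKU _ h).1)
    have habK : (a, b) ∉ insert (b, a) K := by
      intro h
      rcases Finset.mem_insert.mp h with h | h
      · exact haneb (congrArg Prod.fst h)
      · exact hb ((hKU _ h).2)
    have hcard : K'.card = K.card + 2 := by
      rw [hK', Finset.card_insert_of_notMem habK, Finset.card_insert_of_notMem hbaK]
    have hmono : ∀ s t : V, Relation.ReflTransGen (fun s t => (s, t) ∈ K) s t →
        Relation.ReflTransGen (fun s t => (s, t) ∈ K') s t :=
      fun s t h => rtg_sim (fun s t hst => Relation.ReflTransGen.single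
        (Finset.mem_insert_of_mem (Finset.mem_insert_of_mem hst))) h
    refine ⟨insert b U, K', Finset.subset_insert _ _,
      (by rw [Finset.card_insert_of_notMem hb]; omega), ?_, ?_, ?_, ?_⟩
    · intro p hp
      rcases Finset.mem_insert.mp hp with h | h
      · subst h; exact hab
      · rcases Finset.mem_insert.mp h with h | h
        · subst h; exact hba
        · exact hKA p h
    · intro p hp
      rcases Finset.mem_insert.mp hp with h | h
      · subst h; exact ⟨Finset.mem_insert_of_mem ha, Finset.mem_insert_self _ _⟩
      · rcases Finset.mem_insert.mp h with h | h
        · subst h; exact ⟨Finset.mem_insert_self _ _, Finset.mem_insert_of_mem ha⟩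
        · exact ⟨Finset.mem_insert_of_mem (hKU p h).1, Finset.mem_insert_of_mem (hKU p h).2⟩
    · intro s hs t ht
      rcases Finset.mem_insert.mp hs with hs' | hs' <;>
        rcases Finset.mem_insert.mp ht with ht' | ht'
      · subst hs'; subst ht'; exact .refl
      · subst hs'
        exact Relation.ReflTransGen.head hba' (hmono a t (hKstrong a ha t ht'))
      · subst ht'
        exact (hmono s a (hKstrong s hs' a ha)).tail hab'
      · exact hmono s t (hKstrong s hs' t ht')
    · rcases hdich with ⟨hsym, hcount, hacyc⟩ | ⟨hU2', hcount⟩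
      · refine Or.inl ⟨?_, ?_, ?_⟩
        · intro p hp
          rcases Finset.mem_insert.mp hp with h | h
          · subst h; exact hba'
          · rcases Finset.mem_insert.mp h with h | h
            · subst h; exact hab'
            · exact Finset.mem_insert_of_mem (Finset.mem_insert_of_mem (hsym p h))
        · rw [hcard, Finset.card_insert_of_notMem hb]; omega
        · refine acyclic_insert_pendant (G := mkGraph K) (y := b) (u := a)
            (fun h => hb (h ▸ ha)) hacyc ?_ ?_
          · intro c hc
            rcases hc.2 with h | h
            · exact hb (hKU _ h).1
            · exact hb (hKU _ h).2
          · intro s t hst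
            rcases hst.2 with h | h
            · rcases Finset.mem_insert.mp h with h | h
              · exact Or.inr (Or.inl ⟨congrArg Prod.fst h, congrArg Prod.snd h⟩)
              · rcases Finset.mem_insert.mp h with h | h
                · exact Or.inr (Or.inr ⟨congrArg Prod.fst h, congrArg Prod.snd h⟩)
                · exact Or.inl ⟨hst.1, Or.inl h⟩
            · rcases Finset.mem_insert.mp h with h | h
              · exact Or.inr (Or.inr ⟨congrArg Prod.snd h, congrArg Prod.fst h⟩)
              · rcases Finset.mem_insert.mp h with h | h
                · exact Or.inr (Or.inl ⟨congrArg Prod.snd h, congrArg Prod.fst h⟩)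
                · exact Or.inl ⟨hst.1, Or.inr h⟩
      · refine Or.inr ⟨?_, ?_⟩
        · rw [Finset.card_insert_of_notMem hb]; omega
        · rw [hcard, Finset.card_insert_of_notMem hb]; omega
  · -- ear / reroute case
    obtain ⟨u, hu, y, hy, huy⟩ := first_exit (hA u₀ w) hu₀ hw
    obtain ⟨z, hyz, hz, v, hv, hzv⟩ := first_entry (hA y u₀) hu₀ hy
    obtain ⟨l, hlchain, hllast⟩ := List.exists_isChain_cons_of_relationReflTransGen hyz
    obtain ⟨m, hmchain, hmlast, hmnodup, hmsub⟩ :=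
      exists_nodup_chain _ l.length l y le_rfl hlchain
    have hout : ∀ x ∈ y :: m, x ∉ U := by
      intro x hx
      rcases List.mem_cons.mp hx with h | h
      · exact h ▸ hy
      · exact (List.IsChain.cons_induction (fun x => x ∉ U) m hmchain
          (fun s t hst h => hst.2.2) hy) x h
    have hchainA : List.Chain A u (y :: m) :=
      List.Chain.cons huy (List.IsChain.imp (fun a b h => h.1) hmchain)
    have hnodup : (u :: y :: m).Nodup := by
      rw [List.nodup_cons]
      exact ⟨fun hmem => (hout u hmem) hu, hmnodup⟩
    have hmlast' : (y :: m).getLast (List.cons_ne_nil _ _) = z := by rw [hmlast, hllast]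
    have hzv' : A ((y :: m).getLast (List.cons_ne_nil _ _)) v := hmlast' ▸ hzv
    rcases hdich with ⟨hsym, hcount, hacyc⟩ | ⟨hU2', hcount⟩
    · cases m with
      | cons c t =>
        -- long ear: switch to the sparse mode
        obtain ⟨U', K', hsub, h1, h2, h3, hcU, hcK⟩ :=
          add_ear hKA hKU hKstrong hu hv hchainA hnodup hout hzv'
        have hlen : (y :: c :: t).length = t.length + 2 := by simp
        refine ⟨U', K', hsub, ?_, h1, h2, h3, Or.inr ⟨?_, ?_⟩⟩ <;> omega
      | nil =>
        -- reroute: ear u → y → v with u ≠ v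
        have hyv : A y v := by simpa using hzv'
        have huv : u ≠ v := by
          rintro rfl
          exact hsympair ⟨u, hu, y, hy, huy, hyv⟩
        obtain ⟨l₂, hl2chain, hl2last⟩ :=
          List.exists_isChain_cons_of_relationReflTransGen (hKstrong v hv u hu)
        obtain ⟨c, hcchain, hclast, hcnodup, _⟩ :=
          exists_nodup_chain _ l₂.length l₂ v le_rfl hl2chain
        have hclast' : (v :: c).getLast (List.cons_ne_nil _ _) = u := by
          rw [hclast, hl2last]
        have hcne : c ≠ [] := by
          intro h
          subst h
          simp at hclast'
          exact huv hclast'.symm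
        obtain ⟨q, hqE, hq2⟩ := chainArcs_last_arc c v hcne
        rw [hclast'] at hq2
        have hpmem : q.1 ∈ v :: c := (chainArcs_mem_ends c v q hqE).1
        have hpuK : (q.1, u) ∈ K := by
          have h := chainArcs_rel c v hcchain q hqE
          rw [← hq2]
          exact h
        have hupK : (u, q.1) ∈ K := hsym _ hpuK
        set K' := insert (u, y) (insert (y, v) (K.erase (u, q.1))) with hK'
        have hyU : ∀ x, (y, x) ∉ K := fun x h => hy (hKU _ h).1
        have hxyU : ∀ x, (x, y) ∉ K := fun x h => hy (hKU _ h).2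
        have huyK' : (u, y) ∈ K' := Finset.mem_insert_self _ _
        have hyvK' : (y, v) ∈ K' := Finset.mem_insert_of_mem (Finset.mem_insert_self _ _)
        -- v reaches q.1 inside K' (avoiding the erased arc)
        have hvp : Relation.ReflTransGen (fun s t => (s, t) ∈ K') v q.1 := by
          refine rtg_sim (fun s t hst => Relation.ReflTransGen.single ?_)
            (chainArcs_reach_head c v q.1 hpmem)
          have hstK : (s, t) ∈ K := chainArcs_rel c v hcchain (s, t) hst
          have hsu : s ≠ u := by
            have := chainArcs_fst_ne_last c v hcnodup (s, t) hst
            rwa [hclast'] at this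
          refine Finset.mem_insert_of_mem (Finset.mem_insert_of_mem ?_)
          exact Finset.mem_erase.mpr ⟨by simp [Prod.ext_iff]; tauto, hstK⟩
        have hsim : ∀ s t : V, (s, t) ∈ K →
            Relation.ReflTransGen (fun s t => (s, t) ∈ K') s t := by
          intro s t hst
          by_cases hstu : (s, t) = (u, q.1)
          · obtain ⟨h1, h2⟩ := Prod.mk.injEq .. ▸ hstu
            subst h1; subst h2
            exact Relation.ReflTransGen.head huyK'
              (Relation.ReflTransGen.head hyvK' hvp)
          · exact Relation.ReflTransGen.single (Finset.mem_insert_of_mem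
              (Finset.mem_insert_of_mem (Finset.mem_erase.mpr ⟨hstu, hst⟩)))
        have f1 : ∀ s ∈ U, ∀ t ∈ U, Relation.ReflTransGen (fun s t => (s, t) ∈ K') s t :=
          fun s hs t ht => rtg_sim (fun s t h => hsim s t h) (hKstrong s hs t ht)
        have hU2 : 2 ≤ U.card := Finset.one_lt_card.mpr ⟨u, hu, v, hv, huv⟩
        have hcard : K'.card = K.card + 1 := by
          have h1 : (y, v) ∉ K.erase (u, q.1) := fun h => hyU v (Finset.mem_of_mem_erase h)
          have h2 : (u, y) ∉ insert (y, v) (K.erase (u, q.1)) := by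
            intro h
            rcases Finset.mem_insert.mp h with h | h
            · have h1 : u = y := congrArg Prod.fst h
              exact hy (h1 ▸ hu)
            · exact hxyU u (Finset.mem_of_mem_erase h)
          rw [hK', Finset.card_insert_of_notMem h2, Finset.card_insert_of_notMem h1,
            Finset.card_erase_of_mem hupK]
          have : 1 ≤ K.card := Finset.card_pos.mpr ⟨_, hupK⟩
          omega
        refine ⟨insert y U, K', Finset.subset_insert _ _,
          (by rw [Finset.card_insert_of_notMem hy]; omega), ?_, ?_, ?_, ?_⟩
        · intro p hp
          rcases Finset.mem_insert.mp hp with h | h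
          · subst h; exact huy
          · rcases Finset.mem_insert.mp h with h | h
            · subst h; exact hyv
            · exact hKA p (Finset.mem_of_mem_erase h)
        · intro p hp
          rcases Finset.mem_insert.mp hp with h | h
          · subst h; exact ⟨Finset.mem_insert_of_mem hu, Finset.mem_insert_self _ _⟩
          · rcases Finset.mem_insert.mp h with h | h
            · subst h; exact ⟨Finset.mem_insert_self _ _, Finset.mem_insert_of_mem hv⟩
            · have := hKU p (Finset.mem_of_mem_erase h)
              exact ⟨Finset.mem_insert_of_mem this.1, Finset.mem_insert_of_mem this.2⟩
        · intro s hs t ht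
          rcases Finset.mem_insert.mp hs with hs' | hs' <;>
            rcases Finset.mem_insert.mp ht with ht' | ht'
          · subst hs'; subst ht'; exact .refl
          · subst hs'
            exact Relation.ReflTransGen.head hyvK' (f1 v hv t ht')
          · subst ht'
            exact (f1 s hs' u hu).tail huyK'
          · exact f1 s hs' t ht'
        · refine Or.inr ⟨?_, ?_⟩ <;>
            rw [Finset.card_insert_of_notMem hy]
          · omega
          · rw [hcard]; omega
    · -- already in sparse mode: any ear works
      obtain ⟨U', K', hsub, h1, h2, h3, hcU, hcK⟩ :=
        add_ear hKA hKU hKstrong hu hv hchainA hnodup hout hzv'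
      have hlen : 1 ≤ (y :: m).length := by simp
      refine ⟨U', K', hsub, ?_, h1, h2, h3, Or.inr ⟨?_, ?_⟩⟩ <;> omega


lemma build [Fintype V] {A : V → V → Prop} (hA : ∀ u v, Relation.ReflTransGen A u v) :
    ∀ (k : ℕ) (U : Finset V) (K : Finset (V × V)),
      (Finset.univ : Finset V).card - U.card ≤ k → U.Nonempty → Inv A U K →
      ∃ K', Inv A (Finset.univ : Finset V) K' := by
  intro k
  induction k with
  | zero =>
    intro U K hk hne hInv
    have hle : (Finset.univ : Finset V).card ≤ U.card := by omega
    have : U = Finset.univ :=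
      Finset.eq_univ_of_card U (le_antisymm (Finset.card_le_univ U)
        (by rwa [Finset.card_univ] at hle))
    subst this
    exact ⟨K, hInv⟩
  | succ k ih =>
    intro U K hk hne hInv
    by_cases hU : U = Finset.univ
    · subst hU
      exact ⟨K, hInv⟩
    · obtain ⟨U', K', hsub, hlt, hInv'⟩ := step hA hne hU hInv
      obtain ⟨x, hx⟩ := hne
      have hne' : U'.Nonempty := ⟨x, hsub hx⟩
      exact ih U' K' (by omega) hne' hInv'

end build
end StmtAux



/-- Every strong digraph on `n` vertices has a strong spanning subdigraph `H`
with at most `2n - 2` arcs; if `H` has exactly `2n - 2` arcs then `H` is a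
symmetric digraph whose underlying undirected graph is a tree. -/
theorem stmt17 {V : Type} [Fintype V] [Nonempty V] (D : Dgraph V) (n : ℕ)
    (hn : Fintype.card V = n) (hD : D.IsStrong) :
    ∃ H : Dgraph V, (∀ u v, H.Arc u v → D.Arc u v) ∧ H.IsStrong ∧
      H.arcCount ≤ 2 * n - 2 ∧
      (H.arcCount = 2 * n - 2 → H.IsSymmetric ∧ H.underlying.IsTree) := by
  classical
  obtain ⟨v₀⟩ := (inferInstance : Nonempty V)
  have hInv₀ : StmtAux.Inv D.Arc {v₀} (∅ : Finset (V × V)) := by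
    refine ⟨by simp, by simp, ?_, Or.inl ⟨by simp, by simp, ?_⟩⟩
    · intro a ha b hb
      rw [Finset.mem_singleton] at ha hb
      subst ha; subst hb; exact .refl
    · exact StmtAux.acyclic_of_no_adj (fun a b h => by simp [StmtAux.mkGraph] at h)
  obtain ⟨K, hKA, hKU, hKstrong, hdich⟩ :=
    StmtAux.build hD (Finset.univ : Finset V).card {v₀} ∅ (Nat.sub_le _ _)
      ⟨v₀, Finset.mem_singleton_self v₀⟩ hInv₀
  set H : Dgraph V := ⟨fun a b => (a, b) ∈ K, fun v h => D.loopless v (hKA (v, v) h)⟩ with hH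
  have harc : ∀ u v, H.Arc u v → D.Arc u v := fun u v h => hKA (u, v) h
  have hne : ∀ a b, H.Arc a b → a ≠ b := fun a b h hab => D.loopless b (hab ▸ harc a b h)
  have hstrong : H.IsStrong := fun a b => hKstrong a (Finset.mem_univ a) b (Finset.mem_univ b)
  have hcount : H.arcCount = K.card := by
    have e : {p : V × V // H.Arc p.1 p.2} ≃ {p : V × V // p ∈ K} :=
      Equiv.subtypeEquivRight (fun p => by
        show ((p.1, p.2) ∈ K) ↔ (p ∈ K)
        rw [Prod.mk.eta])
    rw [show H.arcCount = Nat.card {p : V × V // H.Arc p.1 p.2} from rfl,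
      Nat.card_congr e, Nat.card_eq_finsetCard]
  have hreach : ∀ a b : V, H.underlying.Reachable a b := by
    intro a b
    have h := hstrong a b
    induction h with
    | refl => exact SimpleGraph.Reachable.refl _
    | tail _ hcb ih => exact ih.trans (SimpleGraph.Adj.reachable (Or.inl hcb))
  have hconn : H.underlying.Connected := SimpleGraph.Connected.mk (fun a b => hreach a b)
  have hund : H.underlying = StmtAux.mkGraph K := by
    ext a b
    constructor
    · rintro (h | h)
      · exact ⟨hne a b h, Or.inl h⟩
      · exact ⟨(hne b a h).symm, Or.inr h⟩
    · rintro ⟨_, h | h⟩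
      · exact Or.inl h
      · exact Or.inr h
  refine ⟨H, harc, hstrong, ?_, ?_⟩
  · rcases hdich with ⟨_, hc, _⟩ | ⟨_, hc⟩ <;>
      rw [hcount] <;> rw [Finset.card_univ, hn] at hc <;> omega
  · intro heq
    rcases hdich with ⟨hsym, hc, hacyc⟩ | ⟨hU2, hc⟩
    · exact ⟨fun a b h => hsym (a, b) h, ⟨hconn, hund ▸ hacyc⟩⟩
    · exfalso
      rw [hcount] at heq
      rw [Finset.card_univ, hn] at hc hU2
      omega
end

section
/- Every minimally strong subgraph (n,ℓ)-connected digraph on n vertices has at most 2ℓ(n−1) arcs, i.e., F(n,n,ℓ) ≤ 2ℓ(n−1). -/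
section Aux

open Dgraph

variable {V : Type}

/-- Walks of length `k`. -/
private def rpow (A : V → V → Prop) : ℕ → V → V → Prop
  | 0 => Eq
  | (k+1) => fun u v => ∃ w, rpow A k u w ∧ A w v

private lemma rtg_iff_rpow {A : V → V → Prop} {u v : V} :
    Relation.ReflTransGen A u v ↔ ∃ k, rpow A k u v := by
  constructor
  · intro h
    induction h with
    | refl => exact ⟨0, rfl⟩
    | tail _ hav ih => obtain ⟨k, hk⟩ := ih; exact ⟨k+1, _, hk, hav⟩
  · rintro ⟨k, hk⟩
    induction k generalizing v with
    | zero => cases hk; rfl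
    | succ k ih => obtain ⟨w, hw, ha⟩ := hk; exact (ih hw).tail ha

private lemma exists_outtree (A : V → V → Prop) (r : V)
    (hA : ∀ v, Relation.ReflTransGen A r v) :
    ∃ T : V → V → Prop, (∀ u v, T u v → A u v) ∧
      (∀ v, Relation.ReflTransGen T r v) ∧
      (∀ u u' v, T u v → T u' v → u = u') ∧ (∀ u v, T u v → v ≠ r) := by
  classical
  set d : V → ℕ := fun v => Nat.find (rtg_iff_rpow.mp (hA v)) with hd
  have hspec : ∀ v, rpow A (d v) r v := fun v => Nat.find_spec (rtg_iff_rpow.mp (hA v))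
  have hmin : ∀ v k, rpow A k r v → d v ≤ k := fun v k h => Nat.find_min' _ h
  have hpar : ∀ v, v ≠ r → ∃ w, A w v ∧ d w < d v := by
    intro v hv
    have hd0 : d v ≠ 0 := by
      intro h0
      have h1 := hspec v
      rw [h0] at h1
      exact hv h1.symm
    obtain ⟨k, hk⟩ := Nat.exists_eq_succ_of_ne_zero hd0
    have h1 := hspec v
    rw [hk] at h1
    obtain ⟨w, hw, ha⟩ := h1
    exact ⟨w, ha, by rw [hk]; exact Nat.lt_succ_of_le (hmin w k hw)⟩
  choose par hparA hpard using hpar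
  refine ⟨fun u v => ∃ h : v ≠ r, u = par v h, ?_, ?_, ?_, ?_⟩
  · rintro u v ⟨h, rfl⟩; exact hparA v h
  · have reach : ∀ n v, d v ≤ n →
        Relation.ReflTransGen (fun u v => ∃ h : v ≠ r, u = par v h) r v := by
      intro n
      induction n with
      | zero =>
        intro v hv
        by_cases h : v = r
        · subst h; rfl
        · exact absurd hv (by have := hpard v h; omega)
      | succ n ih =>
        intro v hv
        by_cases h : v = r
        · subst h; rfl
        · have hlt := hpard v h
          exact (ih (par v h) (by omega)).tail ⟨h, rfl⟩
    exact fun v => reach (d v) v le_rfl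
  · rintro u u' v ⟨h, rfl⟩ ⟨h', rfl⟩; rfl
  · rintro u v ⟨h, -⟩; exact h

/-- Every "strongly connected everywhere" relation contains a strong spanning
subrelation with at most `2(n-1)` arcs. -/
private lemma exists_small_strong [Fintype V] (A : V → V → Prop) (r : V)
    (hA : ∀ u v, Relation.ReflTransGen A u v) :
    ∃ T : V → V → Prop, (∀ u v, T u v → A u v) ∧
      (∀ u v, Relation.ReflTransGen T u v) ∧
      Nat.card {p : V × V // T p.1 p.2} ≤ 2 * (Fintype.card V - 1) := by
  classical
  obtain ⟨To, hToA, hToreach, hTouniq, hTone⟩ := exists_outtree A r (fun v => hA r v)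
  obtain ⟨Ti, hTiA, hTireach, hTiuniq, hTine⟩ :=
    exists_outtree (Function.swap A) r (fun v => Relation.reflTransGen_swap.mpr (hA v r))
  refine ⟨fun u v => To u v ∨ Ti v u, ?_, ?_, ?_⟩
  · rintro u v (h | h)
    · exact hToA u v h
    · exact hTiA v u h
  · intro u v
    have h1 : Relation.ReflTransGen (fun u v => To u v ∨ Ti v u) u r := by
      have := hTireach u
      have h2 : Relation.ReflTransGen (Function.swap Ti) u r :=
        Relation.reflTransGen_swap.mpr this
      exact Relation.ReflTransGen.mono (fun a b h => Or.inr h) _ _ h2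
    have h3 : Relation.ReflTransGen (fun u v => To u v ∨ Ti v u) r v :=
      Relation.ReflTransGen.mono (fun a b h => Or.inl h) _ _ (hToreach v)
    exact h1.trans h3
  · have hcard : Nat.card ({v : V // v ≠ r} ⊕ {v : V // v ≠ r}) =
        2 * (Fintype.card V - 1) := by
      rw [Nat.card_sum, Nat.card_eq_fintype_card]
      have : Fintype.card {v : V // v ≠ r} = Fintype.card V - 1 := by
        rw [Fintype.card_subtype_compl, Fintype.card_subtype_eq]
      rw [this]; ring
    rw [← hcard]
    apply Nat.card_le_card_of_injective
      (fun x => if h : To x.1.1 x.1.2 then Sum.inl ⟨x.1.2, hTone _ _ h⟩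
        else Sum.inr ⟨x.1.1, hTine _ _ (x.2.resolve_left h)⟩)
    rintro ⟨⟨a, b⟩, hab⟩ ⟨⟨c, d⟩, hcd⟩ h
    simp only at h
    split_ifs at h with h1 h2 h2 <;>
    first
      | exact Sum.noConfusion h
      | (have hbd : b = d := by simpa using h
         subst hbd
         have hac : a = c := hTouniq a c b h1 h2
         subst hac; rfl)
      | (have hac : a = c := by simpa using h
         subst hac
         have hbd : b = d := hTiuniq b d a (hab.resolve_left h1) (hcd.resolve_left h2)
         subst hbd; rfl)

/-- The family-size set for spanning strong subgraphs is bounded above. -/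
private lemma bdd_above_family [Fintype V] (D : Dgraph V) (h2 : 2 ≤ Fintype.card V) :
    BddAbove {p : ℕ | ∃ f : Fin p → StrongSub D,
      (∀ i, (Set.univ : Set V) ⊆ (f i).verts) ∧
      (∀ i j, i ≠ j → (f i).verts ∩ (f j).verts = Set.univ) ∧
      (∀ i j, i ≠ j → ∀ u v, ¬ ((f i).Arc u v ∧ (f j).Arc u v))} := by
  classical
  refine ⟨D.arcCount, ?_⟩
  rintro p ⟨f, hverts, -, hdisj⟩
  obtain ⟨u, v, huv⟩ : ∃ u v : V, u ≠ v := Fintype.exists_pair_of_one_lt_card h2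
  have harc : ∀ i : Fin p, ∃ a b, (f i).Arc a b := by
    intro i
    have hr := (f i).strong u (hverts i (Set.mem_univ u)) v (hverts i (Set.mem_univ v))
    rcases (Relation.ReflTransGen.cases_head hr) with h | ⟨c, hc, -⟩
    · exact absurd h huv
    · exact ⟨u, c, hc⟩
  choose a b hab using harc
  have hinj : Function.Injective
      (fun i : Fin p => (⟨(a i, b i), (f i).arc_sub _ _ (hab i)⟩ :
        {q : V × V // D.Arc q.1 q.2})) := by
    intro i j h
    by_contra hij
    simp only [Subtype.mk.injEq, Prod.mk.injEq] at h
    exact hdisj i j hij (a i) (b i) ⟨hab i, by rw [h.1, h.2]; exact hab j⟩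
  calc p = Nat.card (Fin p) := by simp
    _ ≤ Nat.card {q : V × V // D.Arc q.1 q.2} := Nat.card_le_card_of_injective _ hinj
    _ = D.arcCount := rfl

private lemma kappa_card_eq [Fintype V] (D : Dgraph V) :
    D.kappa (Fintype.card V) = D.kappaS Set.univ := by
  have hset : {m : ℕ | ∃ S : Finset V, S.card = Fintype.card V ∧ kappaS D ↑S = m} =
      {D.kappaS Set.univ} := by
    ext m
    simp only [Set.mem_setOf_eq, Set.mem_singleton_iff]
    constructor
    · rintro ⟨S, hS, rfl⟩
      rw [(Finset.card_eq_iff_eq_univ S).mp hS, Finset.coe_univ]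
    · rintro rfl
      exact ⟨Finset.univ, by simp, by rw [Finset.coe_univ]⟩
  rw [kappa, hset, csInf_singleton]

end Aux

/-- Every minimally strong subgraph `(n,ℓ)`-connected digraph on `n` vertices
has at most `2ℓ(n-1)` arcs. -/
theorem stmt18 {V : Type} [Fintype V] (D : Dgraph V) (n ℓ : ℕ)
    (hn : Fintype.card V = n) (hl : 1 ≤ ℓ) (hD : D.MinSSC n ℓ) :
    D.arcCount ≤ 2 * ℓ * (n - 1) := by
  classical
  subst hn
  rcases Nat.lt_or_ge (Fintype.card V) 2 with h2 | h2
  · -- at most one vertex: no arcs at all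
    have hemp : IsEmpty {p : V × V // D.Arc p.1 p.2} := by
      constructor
      rintro ⟨⟨u, v⟩, huv⟩
      have huvv : u = v := Fintype.card_le_one_iff.mp (by omega) u v
      subst huvv
      exact D.loopless u huv
    have : D.arcCount = 0 := Nat.card_of_isEmpty
    omega
  · obtain ⟨r⟩ : Nonempty V := Fintype.card_pos_iff.mp (by omega)
    set 𝒮 : Dgraph V → Set ℕ := fun D' => {p : ℕ | ∃ f : Fin p → D'.StrongSub,
      (∀ i, (Set.univ : Set V) ⊆ (f i).verts) ∧
      (∀ i j, i ≠ j → (f i).verts ∩ (f j).verts = Set.univ) ∧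
      (∀ i j, i ≠ j → ∀ u v, ¬ ((f i).Arc u v ∧ (f j).Arc u v))} with h𝒮
    have hSeq : ∀ D' : Dgraph V, D'.kappaS Set.univ = sSup (𝒮 D') := fun _ => rfl
    have hk1 : ℓ ≤ sSup (𝒮 D) := by
      have h := hD.1
      rw [kappa_card_eq, hSeq] at h
      exact h
    have hbdd : BddAbove (𝒮 D) := bdd_above_family D h2
    have hne : (𝒮 D).Nonempty :=
      ⟨0, Fin.elim0, fun i => i.elim0, fun i => i.elim0, fun i => i.elim0⟩
    obtain ⟨f, hfv, -, hfd⟩ := Nat.sSup_mem hne hbdd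
    set g : Fin ℓ → D.StrongSub := fun i => f (Fin.castLE hk1 i) with hg
    have hgd : ∀ i j, i ≠ j → ∀ u v, ¬ ((g i).Arc u v ∧ (g j).Arc u v) :=
      fun i j hij u v =>
        hfd _ _ (fun h => hij (Fin.castLE_injective hk1 h)) u v
    have hreach : ∀ i, ∀ u v : V, Relation.ReflTransGen (g i).Arc u v :=
      fun i u v => (g i).strong u (hfv _ (Set.mem_univ u)) v (hfv _ (Set.mem_univ v))
    choose T hTsub hTstrong hTcard using
      fun i : Fin ℓ => exists_small_strong (g i).Arc r (hreach i)
    have hcover : ∀ u v, D.Arc u v → ∃ i, T i u v := by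
      by_contra hc
      push_neg at hc
      obtain ⟨u, v, huv, hnone⟩ := hc
      have hmem' : ℓ ∈ 𝒮 (D.deleteArc (u, v)) := by
        refine ⟨fun i => ⟨Set.univ, T i, ?_, ?_, ?_⟩, fun i => subset_rfl,
          fun i j _ => by simp, ?_⟩
        · intro a b hab
          refine ⟨(g i).arc_sub a b (hTsub i a b hab), ?_⟩
          intro he
          rw [Prod.mk.injEq] at he
          obtain ⟨rfl, rfl⟩ := he
          exact hnone i hab
        · exact fun a b _ => ⟨trivial, trivial⟩
        · exact fun a _ b _ => hTstrong i a b
        · rintro i j hij a b ⟨ha, hb⟩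
          exact hgd i j hij a b ⟨hTsub i a b ha, hTsub j a b hb⟩
      have hle' : ℓ ≤ sSup (𝒮 (D.deleteArc (u, v))) :=
        le_csSup (bdd_above_family _ h2) hmem'
      rw [← hSeq, ← kappa_card_eq] at hle'
      have := hD.2 (u, v) huv
      omega
    choose idx hidx using
      fun (x : {p : V × V // D.Arc p.1 p.2}) => hcover x.1.1 x.1.2 x.2
    have hinj : Function.Injective (fun x : {p : V × V // D.Arc p.1 p.2} =>
        (⟨idx x, ⟨x.1, hidx x⟩⟩ : Σ i : Fin ℓ, {p : V × V // T i p.1 p.2})) := by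
      intro x y h
      have := congrArg (fun s : (Σ i : Fin ℓ, {p : V × V // T i p.1 p.2}) => s.2.1) h
      exact Subtype.ext this
    have hcount : D.arcCount ≤ Nat.card (Σ i : Fin ℓ, {p : V × V // T i p.1 p.2}) :=
      Nat.card_le_card_of_injective _ hinj
    have hsum : Nat.card (Σ i : Fin ℓ, {p : V × V // T i p.1 p.2}) ≤
        ℓ * (2 * (Fintype.card V - 1)) := by
      rw [Nat.card_eq_fintype_card, Fintype.card_sigma]
      calc ∑ i, Fintype.card {p : V × V // T i p.1 p.2}
          ≤ ∑ _i : Fin ℓ, 2 * (Fintype.card V - 1) :=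
            Finset.sum_le_sum (fun i _ => by
              rw [← Nat.card_eq_fintype_card]; exact hTcard i)
        _ = ℓ * (2 * (Fintype.card V - 1)) := by
            simp [Finset.sum_const, mul_comm]
    calc D.arcCount ≤ _ := hcount
      _ ≤ ℓ * (2 * (Fintype.card V - 1)) := hsum
      _ = 2 * ℓ * (Fintype.card V - 1) := by ring
end
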